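/- arXiv:1407.1158 — 5 statements merged into one kernel-verified Lean document; each statement's English description precedes it below -/
import Mathlib

section
/- Fix P ≥ 1 and sequences (α_k)_{k≥1}, (η_k)_{k≥1} of positive reals with α_k > 2 for all k and η_k/α_k ≤ C k^{−m} for all k, for some constants C > 0 and m > 1/2. Let (λ_{pk})_{1≤p≤P, k≥1} be mutually independent real random variables such that λ_{pk} has the GDP(α_k, η_k) distribution for every p and k. Then almost surely, for every p ∈ {1, …, P}, the series ∑_{k=1}^∞ λ_{pk}² converges; equivalently, max_{1≤p≤P} ∑_{k=1}^∞ λ_{pk}² < ∞ almost surely. -/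
open MeasureTheory ProbabilityTheory

/-- Density of the generalized double Pareto distribution GDP(α, η). -/
noncomputable def gdpPdf (α η x : ℝ) : ℝ :=
  (α / (2 * η)) * (1 + |x| / η) ^ (-(α + 1))

/-- The generalized double Pareto distribution GDP(α, η) as a measure on ℝ. -/
noncomputable def gdpMeasure (α η : ℝ) : Measure ℝ :=
  MeasureTheory.volume.withDensity (fun x => ENNReal.ofReal (gdpPdf α η x))

/-- `X` has the GDP(α, η) distribution under `μ`. -/
def HasGDP {Ω : Type*} [MeasurableSpace Ω] (μ : Measure Ω) (X : Ω → ℝ) (α η : ℝ) : Prop :=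
  Measurable X ∧ Measure.map X μ = gdpMeasure α η

open Filter Set
open scoped ENNReal

/-- Key elementary inequality: for `2 ≤ α` and `0 ≤ c`, `(1+c/3)^3 ≤ (1+c/α)^(α+1)`. -/
lemma gdp_key_pow {α c : ℝ} (hα : 2 ≤ α) (hc : 0 ≤ c) :
    (1 + c / 3) ^ (3 : ℝ) ≤ (1 + c / α) ^ (α + 1) := by
  have hα0 : (0 : ℝ) < α := by linarith
  have h1 : (1 : ℝ) ≤ 1 + c / α := le_add_of_nonneg_right (div_nonneg hc hα0.le)
  rcases le_total α 3 with h3 | h3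
  · have hbase : 1 + c / 3 ≤ 1 + c / α := by
      have : c / 3 ≤ c / α := div_le_div_of_nonneg_left hc hα0 h3
      linarith
    calc (1 + c / 3) ^ (3 : ℝ) ≤ (1 + c / α) ^ (3 : ℝ) :=
          Real.rpow_le_rpow (by positivity) hbase (by norm_num)
      _ ≤ (1 + c / α) ^ (α + 1) :=
          Real.rpow_le_rpow_of_exponent_le h1 (by linarith)
  · have hp : (1 : ℝ) ≤ α / 3 := by rw [le_div_iff₀ (by norm_num : (0:ℝ) < 3)]; linarith
    have hb : 1 + (α / 3) * (c / α) ≤ (1 + c / α) ^ (α / 3) :=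
      one_add_mul_self_le_rpow_one_add (by linarith [div_nonneg hc hα0.le]) hp
    have he : (α / 3) * (c / α) = c / 3 := by field_simp
    rw [he] at hb
    calc (1 + c / 3) ^ (3 : ℝ) ≤ ((1 + c / α) ^ (α / 3)) ^ (3 : ℝ) :=
          Real.rpow_le_rpow (by positivity) hb (by norm_num)
      _ = (1 + c / α) ^ α := by
          rw [← Real.rpow_mul (by positivity)]
          norm_num
      _ ≤ (1 + c / α) ^ (α + 1) :=
          Real.rpow_le_rpow_of_exponent_le h1 (by linarith)

/-- Integrability and value of the comparison integral. -/
lemma gdp_integral_aux {b s : ℝ} (hb : 0 < b) (hs : s < 2) :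
    Integrable (fun x : ℝ => (1 + |x| / b) ^ (s - 3)) volume ∧
      ∫ x : ℝ, (1 + |x| / b) ^ (s - 3) = 2 * (b / (2 - s)) := by
  have hs2 : s - 2 ≠ 0 := by intro h; apply hs.ne; linarith [sub_eq_zero.mp h]
  set g : ℝ → ℝ := fun x => (b / (s - 2)) * (1 + x / b) ^ (s - 2) with hg
  set G : ℝ → ℝ := fun x => (1 + x / b) ^ (s - 3) with hG
  have hu : ∀ x : ℝ, x ∈ Ici (0:ℝ) → (0:ℝ) < 1 + x / b := by
    intro x hx
    have : 0 ≤ x / b := div_nonneg hx hb.le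
    linarith
  have hderiv : ∀ x ∈ Ici (0:ℝ), HasDerivAt g (G x) x := by
    intro x hx
    have h1 : HasDerivAt (fun y : ℝ => 1 + y / b) (1 / b) x := by
      simpa using ((hasDerivAt_id x).div_const b).const_add 1
    have h2 := h1.rpow_const (p := s - 2) (Or.inl (hu x hx).ne')
    have h3 := h2.const_mul (b / (s - 2))
    refine h3.congr_deriv ?_
    have h4 : s - 2 - 1 = s - 3 := by ring
    rw [h4, hG]
    field_simp
  have htend : Tendsto g atTop (nhds 0) := by
    have h1 : Tendsto (fun x : ℝ => 1 + x / b) atTop atTop :=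
      tendsto_atTop_add_const_left _ 1 (tendsto_id.atTop_div_const hb)
    have h2 : Tendsto (fun y : ℝ => y ^ (s - 2)) atTop (nhds 0) := by
      have := tendsto_rpow_neg_atTop (y := 2 - s) (by linarith)
      simpa [neg_sub] using this
    have h3 := (h2.comp h1).const_mul (b / (s - 2))
    simpa using h3
  have hnonneg : ∀ x ∈ Ioi (0:ℝ), 0 ≤ G x := fun x hx =>
    Real.rpow_nonneg (hu x (mem_Ioi.mp hx).le).le _
  have hIntG : IntegrableOn G (Ioi 0) volume :=
    integrableOn_Ioi_deriv_of_nonneg' hderiv hnonneg htend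
  have hvalG : ∫ x in Ioi (0:ℝ), G x = b / (2 - s) := by
    rw [integral_Ioi_of_hasDerivAt_of_nonneg' hderiv hnonneg htend]
    simp only [hg, zero_div, add_zero, Real.one_rpow, mul_one]
    rw [show (2 - s) = -(s - 2) by ring, div_neg]
    ring
  set F : ℝ → ℝ := fun x => (1 + |x| / b) ^ (s - 3) with hF
  have hFG : EqOn G F (Ioi 0) := by
    intro x hx
    simp only [hG, hF, abs_of_pos (mem_Ioi.mp hx)]
  have hIntF : IntegrableOn F (Ioi 0) volume := hIntG.congr_fun hFG measurableSet_Ioi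
  have hIicF : IntegrableOn F (Iic 0) volume := by
    have m : MeasurableEmbedding (fun x : ℝ => -x) := (Homeomorph.neg ℝ).measurableEmbedding
    rw [← Measure.map_neg_eq_self (volume : Measure ℝ)]
    rw [m.integrableOn_map_iff]
    have h5 : (fun x : ℝ => -x) ⁻¹' (Iic 0) = Ici 0 := by
      ext x; simp [neg_le]
    rw [h5]
    have h6 : F ∘ (fun x : ℝ => -x) = F := by
      ext x; simp [hF, abs_neg]
    rw [h6]
    exact (integrableOn_Ici_iff_integrableOn_Ioi).mpr hIntF
  have hIntAll : Integrable F volume := by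
    have := hIicF.union hIntF
    rwa [Iic_union_Ioi, integrableOn_univ] at this
  refine ⟨hIntAll, ?_⟩
  have h7 : ∫ x : ℝ, F x = 2 * ∫ x in Ioi (0:ℝ), G x := integral_comp_abs (f := G)
  rw [h7, hvalG]

/-- Bound on the `s`-th absolute moment of the GDP distribution. -/
lemma gdp_moment_bound {α η s : ℝ} (hα : 2 ≤ α) (hη : 0 < η) (hs0 : 0 < s) (hs2 : s < 2) :
    ∫⁻ x : ℝ, ENNReal.ofReal (|x| ^ s) ∂(gdpMeasure α η) ≤
      ENNReal.ofReal (3 ^ (s + 1) / (2 - s) * (η / α) ^ s) := by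
  have hα0 : (0 : ℝ) < α := by linarith
  set β : ℝ := η / α with hβdef
  have hβ : 0 < β := div_pos hη hα0
  set b : ℝ := 3 * β with hbdef
  have hb : 0 < b := by positivity
  set K : ℝ := 3 ^ s * β ^ s / (2 * β) with hKdef
  have hK : 0 ≤ K := by positivity
  have hdens : Measurable fun x : ℝ => ENNReal.ofReal (gdpPdf α η x) := by
    apply Measurable.ennreal_ofReal
    unfold gdpPdf
    apply Measurable.const_mul
    have hin : Continuous fun x : ℝ => 1 + |x| / η := by fun_prop
    have hcont : Continuous fun x : ℝ => (1 + |x| / η) ^ (-(α + 1)) :=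
      hin.rpow_const (fun x => Or.inl (by positivity : (0:ℝ) < 1 + |x| / η).ne')
    exact hcont.measurable
  have hfm : Measurable fun x : ℝ => ENNReal.ofReal (|x| ^ s) :=
    (((Real.continuous_rpow_const hs0.le).comp continuous_abs).measurable).ennreal_ofReal
  have main : ∀ x : ℝ, gdpPdf α η x * |x| ^ s ≤ K * (1 + |x| / b) ^ (s - 3) := by
    intro x
    set u : ℝ := 1 + |x| / b with hudef
    have hu0 : 0 < u := by positivity
    set c : ℝ := |x| / β with hcdef
    have hc : 0 ≤ c := div_nonneg (abs_nonneg x) hβ.le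
    have hxη : |x| / η = c / α := by
      rw [hcdef, hβdef]; field_simp
    have hxb : |x| / b = c / 3 := by
      rw [hcdef, hbdef, mul_comm, ← div_div]
    have hpos1 : (0 : ℝ) < 1 + |x| / η := by positivity
    have step1 : (1 + |x| / η) ^ (-(α + 1)) ≤ u ^ (-(3 : ℝ)) := by
      rw [Real.rpow_neg hpos1.le, Real.rpow_neg hu0.le]
      apply inv_anti₀ (Real.rpow_pos_of_pos hu0 _)
      calc u ^ (3 : ℝ) = (1 + c / 3) ^ (3 : ℝ) := by rw [hudef, hxb]
        _ ≤ (1 + c / α) ^ (α + 1) := gdp_key_pow hα hc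
        _ = (1 + |x| / η) ^ (α + 1) := by rw [hxη]
    have step2 : |x| ^ s ≤ b ^ s * u ^ s := by
      rw [← Real.mul_rpow hb.le hu0.le]
      apply Real.rpow_le_rpow (abs_nonneg x) _ hs0.le
      have h5 : b * u = b + |x| := by rw [hudef]; field_simp
      rw [h5]; linarith [abs_nonneg x]
    have h6 : gdpPdf α η x * |x| ^ s ≤
        (α / (2 * η) * u ^ (-(3 : ℝ))) * (b ^ s * u ^ s) := by
      unfold gdpPdf
      apply mul_le_mul _ step2 (Real.rpow_nonneg (abs_nonneg x) s) (by positivity)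
      exact mul_le_mul_of_nonneg_left step1 (by positivity)
    refine h6.trans (le_of_eq ?_)
    have h7 : u ^ (-(3 : ℝ)) * u ^ s = u ^ (s - 3) := by
      rw [← Real.rpow_add hu0]; ring_nf
    have h8 : α / (2 * η) = 1 / (2 * β) := by
      rw [hβdef]; field_simp
    have h9 : b ^ s = 3 ^ s * β ^ s := by
      rw [hbdef, Real.mul_rpow (by norm_num) hβ.le]
    calc α / (2 * η) * u ^ (-(3:ℝ)) * (b ^ s * u ^ s)
        = (α / (2 * η)) * b ^ s * (u ^ (-(3:ℝ)) * u ^ s) := by ring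
      _ = (1 / (2 * β)) * (3 ^ s * β ^ s) * u ^ (s - 3) := by rw [h7, h8, h9]
      _ = K * u ^ (s - 3) := by rw [hKdef]; ring
  obtain ⟨hInt, hVal⟩ := gdp_integral_aux (b := b) (s := s) hb hs2
  calc ∫⁻ x : ℝ, ENNReal.ofReal (|x| ^ s) ∂(gdpMeasure α η)
      = ∫⁻ x : ℝ, (ENNReal.ofReal (gdpPdf α η x) * ENNReal.ofReal (|x| ^ s)) := by
        rw [gdpMeasure, lintegral_withDensity_eq_lintegral_mul _ hdens hfm]; rfl
    _ ≤ ∫⁻ x : ℝ, ENNReal.ofReal (K * (1 + |x| / b) ^ (s - 3)) := by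
        apply lintegral_mono
        intro x
        dsimp only
        rw [← ENNReal.ofReal_mul (by unfold gdpPdf; positivity)]
        exact ENNReal.ofReal_le_ofReal (main x)
    _ = ENNReal.ofReal (∫ x : ℝ, K * (1 + |x| / b) ^ (s - 3)) := by
        rw [ofReal_integral_eq_lintegral_ofReal (hInt.const_mul K)]
        filter_upwards with x
        have : (0:ℝ) < 1 + |x| / b := by positivity
        positivity
    _ = ENNReal.ofReal (K * (2 * (b / (2 - s)))) := by
        rw [integral_const_mul, hVal]
    _ = ENNReal.ofReal (3 ^ (s + 1) / (2 - s) * (η / α) ^ s) := by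
        congr 1
        rw [hKdef, hbdef, ← hβdef, Real.rpow_add (by norm_num : (0:ℝ) < 3), Real.rpow_one]
        have h2s : 2 - s ≠ 0 := by intro h; apply hs2.ne'; linarith [sub_eq_zero.mp h]
        field_simp

/-- If `∑ |g k| ^ s` converges for some `0 < s ≤ 2`, then `∑ (g k)^2` converges. -/
lemma gdp_sq_summable_of_rpow_summable {s : ℝ} (hs0 : 0 < s) (hs2 : s ≤ 2) {g : ℕ → ℝ}
    (h : Summable fun k => |g k| ^ s) : Summable fun k => (g k) ^ 2 := by
  have h0 : Tendsto (fun k => |g k| ^ s) atTop (nhds 0) := h.tendsto_atTop_zero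
  have hev : ∀ᶠ k in atTop, (g k) ^ 2 ≤ |g k| ^ s := by
    filter_upwards [h0.eventually (gt_mem_nhds (zero_lt_one))] with k hk
    have habs : |g k| ≤ 1 := by
      by_contra hgt
      push_neg at hgt
      have h1 : (1 : ℝ) = 1 ^ s := (Real.one_rpow s).symm
      have h2 : (1 : ℝ) ^ s ≤ |g k| ^ s := Real.rpow_le_rpow zero_le_one hgt.le hs0.le
      rw [← h1] at h2
      exact absurd hk (not_lt.mpr h2)
    rcases eq_or_lt_of_le (abs_nonneg (g k)) with h0' | hpos
    · have hg0 : g k = 0 := abs_eq_zero.mp h0'.symm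
      simp [hg0, Real.zero_rpow hs0.ne']
    · calc (g k) ^ 2 = |g k| ^ (2 : ℝ) := by
            rw [← sq_abs, ← Real.rpow_natCast |g k| 2]; norm_num
        _ ≤ |g k| ^ s := Real.rpow_le_rpow_of_exponent_ge hpos habs hs2
  obtain ⟨N, hN⟩ := eventually_atTop.mp hev
  have h1 : Summable fun k => |g (k + N)| ^ s := (summable_nat_add_iff N).mpr h
  have h2 : Summable fun k => (g (k + N)) ^ 2 :=
    h1.of_nonneg_of_le (fun k => sq_nonneg _) (fun k => hN _ le_add_self)
  exact (summable_nat_add_iff N).mp h2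

theorem gdp_loadings_rows_square_summable {Ω : Type*} [MeasurableSpace Ω] (μ : Measure Ω)
    [IsProbabilityMeasure μ] (P : ℕ) (hP : 0 < P) (α η : ℕ → ℝ) (C m : ℝ)
    (hC : 0 < C) (hm : 1 / 2 < m)
    (hα : ∀ k : ℕ, 1 ≤ k → 2 < α k) (hη : ∀ k : ℕ, 1 ≤ k → 0 < η k)
    (hbound : ∀ k : ℕ, 1 ≤ k → η k / α k ≤ C * (k : ℝ) ^ (-m))
    (Λ : Fin P × ℕ → Ω → ℝ) (hmeas : ∀ pk, Measurable (Λ pk))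
    (hindep : ProbabilityTheory.iIndepFun Λ μ)
    (hlaw : ∀ (p : Fin P) (k : ℕ), 1 ≤ k →
      Measure.map (Λ (p, k)) μ = gdpMeasure (α k) (η k)) :
    ∀ᵐ ω ∂μ, ∀ p : Fin P, Summable (fun k : ℕ => (Λ (p, k + 1) ω) ^ 2) := by
  have hm0 : 0 < m := by linarith
  set s : ℝ := (1 / m + 2) / 2 with hsdef
  have hs0 : 0 < s := by positivity
  have hs2 : s < 2 := by
    have h1 : 1 / m < 2 := by rw [div_lt_iff₀ hm0]; linarith
    rw [hsdef]; linarith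
  have hsm : 1 < s * m := by
    have h1 : s * m = (1 + 2 * m) / 2 := by rw [hsdef]; field_simp
    rw [h1]; linarith
  set D : ℝ := 3 ^ (s + 1) / (2 - s) * C ^ s with hDdef
  have hD : 0 ≤ D := by
    apply mul_nonneg _ (Real.rpow_nonneg hC.le s)
    apply div_nonneg (Real.rpow_nonneg (by norm_num) _) (by linarith)
  have hmxs : Measurable fun x : ℝ => ENNReal.ofReal (|x| ^ s) :=
    (((Real.continuous_rpow_const hs0.le).comp continuous_abs).measurable).ennreal_ofReal
  rw [ae_all_iff]
  intro p
  set f : ℕ → Ω → ℝ≥0∞ := fun k ω => ENNReal.ofReal (|Λ (p, k + 1) ω| ^ s) with hfdef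
  have hfm : ∀ k, Measurable (f k) := fun k => hmxs.comp (hmeas (p, k + 1))
  have hbnd : ∀ k : ℕ, ∫⁻ ω, f k ω ∂μ ≤
      ENNReal.ofReal (D * ((k + 1 : ℕ) : ℝ) ^ (-(s * m))) := by
    intro k
    have hk1 : 1 ≤ k + 1 := Nat.le_add_left 1 k
    have key : ∫⁻ ω, f k ω ∂μ =
        ∫⁻ x : ℝ, ENNReal.ofReal (|x| ^ s) ∂(gdpMeasure (α (k + 1)) (η (k + 1))) := by
      rw [← hlaw p (k + 1) hk1, lintegral_map hmxs (hmeas (p, k + 1))]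
    rw [key]
    refine (gdp_moment_bound (hα (k + 1) hk1).le (hη (k + 1) hk1) hs0 hs2).trans ?_
    apply ENNReal.ofReal_le_ofReal
    set X : ℝ := ((k + 1 : ℕ) : ℝ) with hXdef
    have hX0 : (0 : ℝ) < X := by positivity
    have hβ0 : 0 < η (k + 1) / α (k + 1) :=
      div_pos (hη (k + 1) hk1) (by linarith [hα (k + 1) hk1])
    have h1 : η (k + 1) / α (k + 1) ≤ C * X ^ (-m) := hbound (k + 1) hk1
    have h2 : (η (k + 1) / α (k + 1)) ^ s ≤ (C * X ^ (-m)) ^ s :=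
      Real.rpow_le_rpow hβ0.le h1 hs0.le
    have h3 : (C * X ^ (-m)) ^ s = C ^ s * X ^ (-(s * m)) := by
      rw [Real.mul_rpow hC.le (Real.rpow_nonneg hX0.le _), ← Real.rpow_mul hX0.le,
        show -m * s = -(s * m) by ring]
    rw [h3] at h2
    have hcst : (0:ℝ) ≤ 3 ^ (s + 1) / (2 - s) :=
      div_nonneg (Real.rpow_nonneg (by norm_num) _) (by linarith)
    calc 3 ^ (s + 1) / (2 - s) * (η (k + 1) / α (k + 1)) ^ s
        ≤ 3 ^ (s + 1) / (2 - s) * (C ^ s * X ^ (-(s * m))) :=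
          mul_le_mul_of_nonneg_left h2 hcst
      _ = D * X ^ (-(s * m)) := by rw [hDdef]; ring
  have hsum : Summable (fun k : ℕ => D * ((k + 1 : ℕ) : ℝ) ^ (-(s * m))) := by
    apply Summable.mul_left
    have h0 : Summable (fun n : ℕ => (n : ℝ) ^ (-(s * m))) :=
      Real.summable_nat_rpow.mpr (by linarith)
    exact (_root_.summable_nat_add_iff 1).mpr h0
  have htop : ∑' k : ℕ, ENNReal.ofReal (D * ((k + 1 : ℕ) : ℝ) ^ (-(s * m))) < ⊤ := by
    rw [← ENNReal.ofReal_tsum_of_nonneg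
      (fun k => mul_nonneg hD (Real.rpow_nonneg (by positivity) _)) hsum]
    exact ENNReal.ofReal_lt_top
  have hlint : ∫⁻ ω, ∑' k : ℕ, f k ω ∂μ < ⊤ := by
    rw [lintegral_tsum (fun k => (hfm k).aemeasurable)]
    exact lt_of_le_of_lt (ENNReal.tsum_le_tsum hbnd) htop
  have hae : ∀ᵐ ω ∂μ, ∑' k : ℕ, f k ω < ⊤ :=
    ae_lt_top (Measurable.ennreal_tsum hfm) hlint.ne
  filter_upwards [hae] with ω hω
  have h1 : Summable fun k : ℕ => (f k ω).toReal := ENNReal.summable_toReal hω.ne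
  have h2 : Summable fun k : ℕ => |Λ (p, k + 1) ω| ^ s :=
    h1.congr fun k => ENNReal.toReal_ofReal (Real.rpow_nonneg (abs_nonneg _) s)
  exact gdp_sq_summable_of_rpow_summable hs0 hs2.le h2
end

section
/- Fix P ≥ 1, K ≥ 0, and sequences (α_k)_{k≥1}, (η_k)_{k≥1} of positive reals with α_k > 2 for all k. Let (λ_{pk})_{1≤p≤P, k≥1} be mutually independent real random variables such that λ_{pk} has the GDP(α_k, η_k) distribution for every p and k, and suppose S := ∑_{k=K+1}^∞ ( Var[λ_{1k}] + (E[|λ_{1k}|])² ) < ∞. Then for every ε > 0, the probability that there exist i, j ∈ {1, …, P} with ∑_{k=K+1}^∞ |λ_{ik}| |λ_{jk}| ≥ ε is at most (P²/ε) · S. -/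
open MeasureTheory ProbabilityTheory
open scoped ENNReal

section Aux
open Real

lemma gdpPdf_nonneg {α η : ℝ} (hα : 0 < α) (hη : 0 < η) (x : ℝ) : 0 ≤ gdpPdf α η x := by
  unfold gdpPdf; positivity

lemma gdpPdf_measurable (α η : ℝ) : Measurable (gdpPdf α η) := by
  unfold gdpPdf; fun_prop

lemma integrable_sq_gdp {α η : ℝ} (hα : 2 < α) (hη : 0 < η) :
    Integrable (fun x : ℝ => x ^ 2 * gdpPdf α η x) := by
  have hs : (1 : ℝ) < α - 1 := by linarith
  set M : ℝ := max 1 η with hM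
  have hM1 : (1:ℝ) ≤ M := le_max_left _ _
  have hM0 : (0:ℝ) < M := by linarith
  set C : ℝ := α / (2 * η) * η ^ 2 * M ^ (α - 1) with hC
  have hbase : ∀ x : ℝ, (0:ℝ) < 1 + |x| / η := fun x => by positivity
  have hint : Integrable (fun x : ℝ => C * (1 + ‖x‖) ^ (-(α - 1))) volume := by
    exact (integrable_one_add_norm (E := ℝ) (by simp [Module.finrank_self]; linarith)).const_mul C
  refine hint.mono' ?_ (Filter.Eventually.of_forall fun x => ?_)
  · exact ((measurable_id.pow_const 2).mul (gdpPdf_measurable α η)).aestronglyMeasurable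
  · have h1 : |x| ≤ η * (1 + |x| / η) := by
      rw [mul_add, mul_one, mul_div_cancel₀ _ hη.ne']
      have := abs_nonneg x; linarith
    have hx2 : x ^ 2 ≤ η ^ 2 * (1 + |x| / η) ^ (2:ℝ) := by
      rw [Real.rpow_two, ← mul_pow, ← sq_abs x]
      exact pow_le_pow_left₀ (abs_nonneg x) h1 2
    have h2 : x ^ 2 * (1 + |x| / η) ^ (-(α + 1)) ≤ η ^ 2 * (1 + |x| / η) ^ (-(α - 1)) := by
      have := mul_le_mul_of_nonneg_right hx2 (Real.rpow_nonneg (hbase x).le (-(α + 1)))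
      refine this.trans_eq ?_
      rw [mul_assoc, ← Real.rpow_add (hbase x)]
      ring_nf
    have h3 : (1 + |x| / η) ^ (-(α - 1)) ≤ M ^ (α - 1) * (1 + |x|) ^ (-(α - 1)) := by
      have hle : (1 + |x|) / M ≤ 1 + |x| / η := by
        rw [div_le_iff₀ hM0, add_mul, one_mul]
        have h4 : |x| ≤ |x| / η * M := by
          rw [div_mul_eq_mul_div, le_div_iff₀ hη]
          exact mul_le_mul_of_nonneg_left (le_max_right 1 η) (abs_nonneg x)
        linarith
      have hpos : (0:ℝ) < (1 + |x|) / M := by positivity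
      have := Real.rpow_le_rpow_of_nonpos hpos hle (by linarith : -(α - 1) ≤ 0)
      refine this.trans_eq ?_
      rw [Real.div_rpow (by positivity) hM0.le, Real.rpow_neg hM0.le, div_eq_mul_inv, inv_inv]
      ring
    calc ‖x ^ 2 * gdpPdf α η x‖ = x ^ 2 * gdpPdf α η x := by
          rw [Real.norm_eq_abs, abs_of_nonneg (mul_nonneg (sq_nonneg x) (gdpPdf_nonneg (by linarith) hη x))]
      _ = α / (2 * η) * (x ^ 2 * (1 + |x| / η) ^ (-(α + 1))) := by unfold gdpPdf; ring
      _ ≤ α / (2 * η) * (η ^ 2 * (M ^ (α - 1) * (1 + |x|) ^ (-(α - 1)))) := by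
          have hc : (0:ℝ) ≤ α / (2 * η) := by positivity
          refine mul_le_mul_of_nonneg_left (h2.trans ?_) hc
          exact mul_le_mul_of_nonneg_left h3 (by positivity)
      _ = C * (1 + ‖x‖) ^ (-(α - 1)) := by rw [Real.norm_eq_abs]; ring

lemma gdp_memℒp2 {Ω : Type*} [MeasurableSpace Ω] (μ : Measure Ω) [IsProbabilityMeasure μ]
    {X : Ω → ℝ} (hX : Measurable X) {α η : ℝ} (hα : 2 < α) (hη : 0 < η)
    (hlaw : Measure.map X μ = gdpMeasure α η) : MemLp X 2 μ := by
  have hsq : ∫⁻ ω, ENNReal.ofReal ((X ω) ^ 2) ∂μ < ∞ := by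
    have h1 : ∫⁻ ω, ENNReal.ofReal ((X ω) ^ 2) ∂μ
        = ∫⁻ x, ENNReal.ofReal (x ^ 2) ∂(Measure.map X μ) := by
      rw [lintegral_map (by fun_prop) hX]
    rw [h1, hlaw, gdpMeasure,
      lintegral_withDensity_eq_lintegral_mul _ ((gdpPdf_measurable α η).ennreal_ofReal)
        (by fun_prop)]
    have h2 : ∀ x : ℝ, (ENNReal.ofReal (gdpPdf α η x) * ENNReal.ofReal (x ^ 2))
        = ENNReal.ofReal (x ^ 2 * gdpPdf α η x) := fun x => by
      rw [← ENNReal.ofReal_mul (gdpPdf_nonneg (by linarith) hη x), mul_comm]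
    simp only [Pi.mul_apply, h2]
    exact (integrable_sq_gdp hα hη).lintegral_lt_top
  have hint : Integrable (fun ω => (X ω) ^ 2) μ := by
    refine ⟨(hX.pow_const 2).aestronglyMeasurable, ?_⟩
    rw [hasFiniteIntegral_iff_ofReal (ae_of_all _ fun ω => sq_nonneg _)]
    exact hsq
  exact (memLp_two_iff_integrable_sq hX.aestronglyMeasurable).mpr hint

end Aux

theorem gdp_tail_sum_markov_bound {Ω : Type*} [MeasurableSpace Ω] (μ : Measure Ω)
    [IsProbabilityMeasure μ] (P : ℕ) (hP : 0 < P) (K : ℕ) (α η : ℕ → ℝ)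
    (hα : ∀ k : ℕ, 1 ≤ k → 2 < α k) (hη : ∀ k : ℕ, 1 ≤ k → 0 < η k)
    (Λ : Fin P × ℕ → Ω → ℝ) (hmeas : ∀ pk, Measurable (Λ pk))
    (hindep : ProbabilityTheory.iIndepFun Λ μ)
    (hlaw : ∀ (p : Fin P) (k : ℕ), 1 ≤ k →
      Measure.map (Λ (p, k)) μ = gdpMeasure (α k) (η k))
    (S : ℝ)
    (hS : HasSum (fun k : ℕ =>
      variance (Λ (⟨0, hP⟩, k + K + 1)) μ +
        (∫ ω, |Λ (⟨0, hP⟩, k + K + 1) ω| ∂μ) ^ 2) S)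
    (ε : ℝ) (hε : 0 < ε) :
    μ {ω | ∃ i j : Fin P,
        ENNReal.ofReal ε ≤
          ∑' k : ℕ, ENNReal.ofReal (|Λ (i, k + K + 1) ω| * |Λ (j, k + K + 1) ω|)}
      ≤ ENNReal.ofReal ((P : ℝ) ^ 2 / ε * S) := by
  classical
  set z : Fin P := ⟨0, hP⟩
  -- per-index facts
  have hk1 : ∀ k : ℕ, 1 ≤ k + K + 1 := fun k => by omega
  have hℒ2 : ∀ (p : Fin P) (k : ℕ), MemLp (Λ (p, k + K + 1)) 2 μ := fun p k =>
    gdp_memℒp2 μ (hmeas _) (hα _ (hk1 k)) (hη _ (hk1 k)) (hlaw p _ (hk1 k))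
  have hintsq : ∀ (p : Fin P) (k : ℕ), Integrable (fun ω => (Λ (p, k + K + 1) ω) ^ 2) μ :=
    fun p k => (hℒ2 p k).integrable_sq
  have hint : ∀ (p : Fin P) (k : ℕ), Integrable (Λ (p, k + K + 1)) μ :=
    fun p k => (hℒ2 p k).integrable one_le_two
  have hintabs : ∀ (p : Fin P) (k : ℕ), Integrable (fun ω => |Λ (p, k + K + 1) ω|) μ :=
    fun p k => (hint p k).abs
  -- moments depend only on k
  have habs_eq : ∀ (p : Fin P) (k : ℕ),
      ∫ ω, |Λ (p, k + K + 1) ω| ∂μ = ∫ ω, |Λ (z, k + K + 1) ω| ∂μ := by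
    intro p k
    have h1 : ∀ q : Fin P, ∫ ω, |Λ (q, k + K + 1) ω| ∂μ
        = ∫ x, |x| ∂(gdpMeasure (α (k + K + 1)) (η (k + K + 1))) := fun q => by
      rw [← hlaw q _ (hk1 k),
        integral_map (hmeas _).aemeasurable continuous_abs.aestronglyMeasurable]
    rw [h1 p, h1 z]
  have hsq_eq : ∀ (p : Fin P) (k : ℕ),
      ∫ ω, (Λ (p, k + K + 1) ω) ^ 2 ∂μ = ∫ ω, (Λ (z, k + K + 1) ω) ^ 2 ∂μ := by
    intro p k
    have h1 : ∀ q : Fin P, ∫ ω, (Λ (q, k + K + 1) ω) ^ 2 ∂μ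
        = ∫ x, x ^ 2 ∂(gdpMeasure (α (k + K + 1)) (η (k + K + 1))) := fun q => by
      rw [← hlaw q _ (hk1 k),
        integral_map (hmeas _).aemeasurable (continuous_pow 2).aestronglyMeasurable]
    rw [h1 p, h1 z]
  -- the key per-term bound
  have key : ∀ (i j : Fin P) (k : ℕ),
      ∫⁻ ω, ENNReal.ofReal (|Λ (i, k + K + 1) ω| * |Λ (j, k + K + 1) ω|) ∂μ ≤
        ENNReal.ofReal (variance (Λ (z, k + K + 1)) μ +
          (∫ ω, |Λ (z, k + K + 1) ω| ∂μ) ^ 2) := by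
    intro i j k
    by_cases hij : i = j
    · subst hij
      have habs2 : ∀ ω : Ω, |Λ (i, k + K + 1) ω| * |Λ (i, k + K + 1) ω|
          = (Λ (i, k + K + 1) ω) ^ 2 := fun ω => by
        rw [abs_mul_abs_self, sq]
      simp only [habs2]
      rw [← ofReal_integral_eq_lintegral_ofReal (hintsq i k) (ae_of_all _ fun ω => sq_nonneg _)]
      apply ENNReal.ofReal_le_ofReal
      rw [hsq_eq i k]
      have hvar : variance (Λ (z, k + K + 1)) μ
          = (∫ ω, (Λ (z, k + K + 1) ω) ^ 2 ∂μ) - (∫ ω, Λ (z, k + K + 1) ω ∂μ) ^ 2 := by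
        have := variance_eq_sub (hℒ2 z k)
        simpa using this
      have hm : (∫ ω, Λ (z, k + K + 1) ω ∂μ) ^ 2 ≤ (∫ ω, |Λ (z, k + K + 1) ω| ∂μ) ^ 2 := by
        have h1 : |∫ ω, Λ (z, k + K + 1) ω ∂μ| ≤ ∫ ω, |Λ (z, k + K + 1) ω| ∂μ := by
          simpa [Real.norm_eq_abs] using
            norm_integral_le_integral_norm (μ := μ) (f := Λ (z, k + K + 1))
        calc (∫ ω, Λ (z, k + K + 1) ω ∂μ) ^ 2 = |∫ ω, Λ (z, k + K + 1) ω ∂μ| ^ 2 := (sq_abs _).symm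
          _ ≤ (∫ ω, |Λ (z, k + K + 1) ω| ∂μ) ^ 2 := by
              exact pow_le_pow_left₀ (abs_nonneg _) h1 2
      linarith [hvar, hm]
    · -- independent case
      have hne : ((i, k + K + 1) : Fin P × ℕ) ≠ (j, k + K + 1) := by
        simp [Prod.ext_iff, hij]
      have hindep2 : IndepFun (Λ (i, k + K + 1)) (Λ (j, k + K + 1)) μ :=
        hindep.indepFun hne
      have hφ : Measurable (fun x : ℝ => ENNReal.ofReal |x|) := by fun_prop
      have hmul : ∀ ω : Ω, ENNReal.ofReal (|Λ (i, k + K + 1) ω| * |Λ (j, k + K + 1) ω|)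
          = ENNReal.ofReal |Λ (i, k + K + 1) ω| * ENNReal.ofReal |Λ (j, k + K + 1) ω| :=
        fun ω => ENNReal.ofReal_mul (abs_nonneg _)
      simp only [hmul]
      have hlin := lintegral_mul_eq_lintegral_mul_lintegral_of_indepFun
        (hφ.comp (hmeas (i, k + K + 1))) (hφ.comp (hmeas (j, k + K + 1))) (hindep2.comp hφ hφ)
      simp only [Pi.mul_apply, Function.comp_apply] at hlin
      rw [hlin]
      have heval : ∀ q : Fin P, ∫⁻ ω, ENNReal.ofReal |Λ (q, k + K + 1) ω| ∂μ
          = ENNReal.ofReal (∫ ω, |Λ (z, k + K + 1) ω| ∂μ) := fun q => by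
        rw [← ofReal_integral_eq_lintegral_ofReal (hintabs q k) (ae_of_all _ fun ω => abs_nonneg _),
          habs_eq q k]
      rw [heval i, heval j, ← ENNReal.ofReal_mul (integral_nonneg fun ω => abs_nonneg _)]
      apply ENNReal.ofReal_le_ofReal
      have := variance_nonneg (Λ (z, k + K + 1)) μ
      nlinarith [integral_nonneg (μ := μ) (f := fun ω => |Λ (z, k + K + 1) ω|) fun ω => abs_nonneg _]
  -- nonnegativity of S
  have hterm_nonneg : ∀ k : ℕ, 0 ≤ variance (Λ (z, k + K + 1)) μ +
      (∫ ω, |Λ (z, k + K + 1) ω| ∂μ) ^ 2 := fun k =>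
    add_nonneg (variance_nonneg _ _) (sq_nonneg _)
  have hS0 : 0 ≤ S := hS.nonneg hterm_nonneg
  -- the tail-sum function and its lintegral bound
  set g : Fin P → Fin P → Ω → ℝ≥0∞ := fun i j ω =>
    ∑' k : ℕ, ENNReal.ofReal (|Λ (i, k + K + 1) ω| * |Λ (j, k + K + 1) ω|) with hg
  have hgmeas : ∀ i j, Measurable (g i j) := fun i j =>
    Measurable.ennreal_tsum fun k => ((hmeas _).abs.mul (hmeas _).abs).ennreal_ofReal
  have hlint : ∀ i j, ∫⁻ ω, g i j ω ∂μ ≤ ENNReal.ofReal S := by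
    intro i j
    rw [hg]
    simp only
    rw [lintegral_tsum (f := fun k ω => ENNReal.ofReal (|Λ (i, k + K + 1) ω| * |Λ (j, k + K + 1) ω|))
      fun k => ((hmeas _).abs.mul (hmeas _).abs).ennreal_ofReal.aemeasurable]
    calc ∑' k : ℕ, ∫⁻ ω, ENNReal.ofReal (|Λ (i, k + K + 1) ω| * |Λ (j, k + K + 1) ω|) ∂μ
        ≤ ∑' k : ℕ, ENNReal.ofReal (variance (Λ (z, k + K + 1)) μ +
            (∫ ω, |Λ (z, k + K + 1) ω| ∂μ) ^ 2) := ENNReal.tsum_le_tsum (key i j)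
      _ = ENNReal.ofReal S := by
          rw [← ENNReal.ofReal_tsum_of_nonneg hterm_nonneg hS.summable, hS.tsum_eq]
  -- Markov for each pair
  have hmarkov : ∀ i j, μ {ω | ENNReal.ofReal ε ≤ g i j ω} ≤ ENNReal.ofReal (S / ε) := by
    intro i j
    calc μ {ω | ENNReal.ofReal ε ≤ g i j ω}
        ≤ (∫⁻ ω, g i j ω ∂μ) / ENNReal.ofReal ε :=
          meas_ge_le_lintegral_div (hgmeas i j).aemeasurable
            (by simp [ENNReal.ofReal_eq_zero, not_le, hε]) ENNReal.ofReal_ne_top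
      _ ≤ ENNReal.ofReal S / ENNReal.ofReal ε :=
          ENNReal.div_le_div_right (hlint i j) _
      _ = ENNReal.ofReal (S / ε) := (ENNReal.ofReal_div_of_pos hε).symm
  -- union bound
  have hsub : {ω | ∃ i j : Fin P, ENNReal.ofReal ε ≤ g i j ω}
      ⊆ ⋃ i : Fin P, ⋃ j : Fin P, {ω | ENNReal.ofReal ε ≤ g i j ω} := by
    intro ω hω
    obtain ⟨i, j, h⟩ := hω
    exact Set.mem_iUnion.mpr ⟨i, Set.mem_iUnion.mpr ⟨j, h⟩⟩
  calc μ {ω | ∃ i j : Fin P, ENNReal.ofReal ε ≤ g i j ω}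
      ≤ μ (⋃ i : Fin P, ⋃ j : Fin P, {ω | ENNReal.ofReal ε ≤ g i j ω}) := measure_mono hsub
    _ ≤ ∑' i : Fin P, μ (⋃ j : Fin P, {ω | ENNReal.ofReal ε ≤ g i j ω}) := measure_iUnion_le _
    _ ≤ ∑' i : Fin P, ∑' j : Fin P, μ {ω | ENNReal.ofReal ε ≤ g i j ω} :=
        ENNReal.tsum_le_tsum fun i => measure_iUnion_le _
    _ ≤ ∑' _ : Fin P, ∑' _ : Fin P, ENNReal.ofReal (S / ε) :=
        ENNReal.tsum_le_tsum fun i => ENNReal.tsum_le_tsum fun j => hmarkov i j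
    _ = ENNReal.ofReal ((P : ℝ) ^ 2 / ε * S) := by
        rw [tsum_fintype, tsum_fintype]
        simp only [Finset.sum_const, Finset.card_univ, Fintype.card_fin, nsmul_eq_mul]
        rw [show (P : ℝ) ^ 2 / ε * S = (P : ℝ) * ((P : ℝ) * (S / ε)) by field_simp,
          ENNReal.ofReal_mul (by positivity), ENNReal.ofReal_mul (by positivity),
          ENNReal.ofReal_natCast]
end

section
/- Let δ > 2 and ρ > 0, set α_k = δ^k and η_k = ρ for k ≥ 1, fix P ≥ 1, and let (λ_{pk})_{1≤p≤P, k≥1} be mutually independent real random variables with λ_{pk} distributed as GDP(α_k, η_k). Then there exists a constant C > 0 depending only on δ and ρ such that for every ε ∈ (0, 1): if K₀ is any integer with K₀ ≥ C·(1 + log(P/ε²)), then for every K ≥ K₀, with probability greater than 1 − ε, for all i, j ∈ {1, …, P} the series ∑_{k=K+1}^∞ |λ_{ik}||λ_{jk}| converges and is strictly less than ε. In particular K₀ can be taken of order (log δ)^{−1} log(P/ε²). -/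
open MeasureTheory ProbabilityTheory Set
open scoped ENNReal

lemma exp_sq_quarter {y : ℝ} (hy : 0 ≤ y) : y ^ 2 / 4 ≤ Real.exp y := by
  have h := Real.add_one_le_exp (y / 2)
  have h2 : Real.exp (y / 2) * Real.exp (y / 2) = Real.exp y := by
    rw [← Real.exp_add]; ring_nf
  nlinarith [Real.exp_pos (y / 2)]

lemma log_one_add_ge {x : ℝ} (h0 : 0 ≤ x) (h1 : x ≤ 1) : x / 2 ≤ Real.log (1 + x) := by
  have hpos : (0:ℝ) < 1 + x := by linarith
  have h := Real.log_le_sub_one_of_pos (show (0:ℝ) < (1 + x)⁻¹ by positivity)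
  rw [Real.log_inv] at h
  have hinv : (1 + x)⁻¹ * (1 + x) = 1 := inv_mul_cancel₀ hpos.ne'
  nlinarith

lemma rpow_neg_two_eq {x : ℝ} (hx : 0 ≤ x) : x ^ (-2:ℝ) = (x ^ 2)⁻¹ := by
  rw [show (-2:ℝ) = -((2:ℕ):ℝ) by norm_num, Real.rpow_neg hx, Real.rpow_natCast]

lemma aux_lintegral_inv_sq (ρ : ℝ) (hρ : 0 < ρ) :
    ∫⁻ x : ℝ, ENNReal.ofReal (((1 + |x| / ρ) ^ 2)⁻¹) ≤ ENNReal.ofReal (4 * ρ) := by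
  set G : ℝ → ℝ≥0∞ := fun x => ENNReal.ofReal (ρ ^ 2 * (x ^ 2)⁻¹) with hG
  have hmeasG : Measurable G := by
    apply Measurable.ennreal_ofReal
    exact (measurable_const.mul ((measurable_id.pow_const 2).inv))
  have hbound : ∀ x : ℝ, ENNReal.ofReal (((1 + |x| / ρ) ^ 2)⁻¹) ≤
      (Icc (-ρ) ρ).indicator (fun _ => (1:ℝ≥0∞)) x
        + (Iio (-ρ)).indicator G x + (Ioi ρ).indicator G x := by
    intro x
    rcases le_or_gt |x| ρ with h | h
    · have hx1 : ((1 + |x| / ρ) ^ 2)⁻¹ ≤ 1 := by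
        have hd : (0:ℝ) ≤ |x| / ρ := by positivity
        have : (1:ℝ) ≤ (1 + |x| / ρ) ^ 2 := by nlinarith [sq_nonneg (|x| / ρ)]
        exact inv_le_one_of_one_le₀ this
      have hmem : x ∈ Icc (-ρ) ρ := abs_le.mp h
      calc ENNReal.ofReal (((1 + |x| / ρ) ^ 2)⁻¹) ≤ 1 := by
            simpa using ENNReal.ofReal_le_ofReal hx1
        _ ≤ _ := by
            rw [indicator_of_mem hmem]
            exact le_add_of_le_of_nonneg (le_add_of_le_of_nonneg le_rfl zero_le) zero_le
    · have hkey : ((1 + |x| / ρ) ^ 2)⁻¹ ≤ ρ ^ 2 * (x ^ 2)⁻¹ := by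
        have hx0 : (0:ℝ) < |x| := lt_trans hρ h
        have h1 : (|x| / ρ) ^ 2 ≤ (1 + |x| / ρ) ^ 2 := by
          have : (0:ℝ) ≤ |x| / ρ := by positivity
          nlinarith
        have h2 : ((1 + |x| / ρ) ^ 2)⁻¹ ≤ ((|x| / ρ) ^ 2)⁻¹ := by
          apply inv_anti₀ (by positivity) h1
        have h3 : ((|x| / ρ) ^ 2)⁻¹ = ρ ^ 2 * (x ^ 2)⁻¹ := by
          rw [div_pow, ← sq_abs x]
          field_simp
        linarith [h2, h3.le]
      rcases abs_lt.not.mp (not_lt.mpr h.le) with h'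
      have : x ∈ Iio (-ρ) ∨ x ∈ Ioi ρ := by
        rcases lt_or_ge x 0 with hx | hx
        · left; simp only [mem_Iio]; cases abs_cases x with
          | inl hc => linarith [hc.1, hc.2]
          | inr hc => linarith [hc.1]
        · right; simp only [mem_Ioi]; cases abs_cases x with
          | inl hc => linarith [hc.1]
          | inr hc => linarith [hc.2]
      rcases this with hm | hm
      · calc ENNReal.ofReal (((1 + |x| / ρ) ^ 2)⁻¹) ≤ G x := ENNReal.ofReal_le_ofReal hkey
          _ ≤ _ := by
            rw [indicator_of_mem hm]
            exact le_add_of_le_of_nonneg (le_add_of_nonneg_left zero_le) zero_le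
      · calc ENNReal.ofReal (((1 + |x| / ρ) ^ 2)⁻¹) ≤ G x := ENNReal.ofReal_le_ofReal hkey
          _ ≤ _ := by
            rw [indicator_of_mem hm]
            exact le_add_of_nonneg_left zero_le
  have hIoi : ∫⁻ x in Ioi ρ, G x ∂volume = ENNReal.ofReal ρ := by
    have hIntOn : IntegrableOn (fun x : ℝ => ρ ^ 2 * (x ^ 2)⁻¹) (Ioi ρ) := by
      apply Integrable.const_mul
      have := integrableOn_Ioi_rpow_of_lt (show (-2:ℝ) < -1 by norm_num) hρ
      apply this.congr_fun _ measurableSet_Ioi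
      intro x hx
      exact rpow_neg_two_eq (le_of_lt (hρ.trans hx))
    rw [hG]
    rw [← ofReal_integral_eq_lintegral_ofReal hIntOn]
    · congr 1
      rw [MeasureTheory.integral_const_mul]
      have : ∫ x in Ioi ρ, (x ^ 2)⁻¹ = ∫ x in Ioi ρ, x ^ (-2:ℝ) := by
        apply setIntegral_congr_fun measurableSet_Ioi
        intro x hx
        exact (rpow_neg_two_eq (le_of_lt (hρ.trans hx))).symm
      rw [this, integral_Ioi_rpow_of_lt (by norm_num) hρ]
      rw [show (-2:ℝ) + 1 = -1 by norm_num, Real.rpow_neg_one]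
      field_simp
    · filter_upwards [ae_restrict_mem measurableSet_Ioi] with x hx
      have : (0:ℝ) < x := hρ.trans hx
      positivity
  have hIio : ∫⁻ x in Iio (-ρ), G x ∂volume = ENNReal.ofReal ρ := by
    have hmp : MeasurePreserving (fun x : ℝ => -x) volume volume :=
      Measure.measurePreserving_neg volume
    have hpre : (fun x : ℝ => -x) ⁻¹' (Iio (-ρ)) = Ioi ρ := by
      ext x; simp [neg_lt_neg_iff]
    have := hmp.setLIntegral_comp_preimage_emb measurableEmbedding_neg G (Iio (-ρ))
    rw [hpre] at this
    rw [← this, ← hIoi]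
    apply lintegral_congr
    intro x
    simp [hG, neg_pow]
  calc ∫⁻ x : ℝ, ENNReal.ofReal (((1 + |x| / ρ) ^ 2)⁻¹)
      ≤ ∫⁻ x : ℝ, ((Icc (-ρ) ρ).indicator (fun _ => (1:ℝ≥0∞)) x
        + (Iio (-ρ)).indicator G x + (Ioi ρ).indicator G x) := lintegral_mono hbound
    _ = ENNReal.ofReal (ρ + ρ) + ENNReal.ofReal ρ + ENNReal.ofReal ρ := by
        rw [lintegral_add_right _ (hmeasG.indicator measurableSet_Ioi),
          lintegral_add_right _ (hmeasG.indicator measurableSet_Iio),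
          lintegral_indicator measurableSet_Icc,
          lintegral_indicator measurableSet_Iio,
          lintegral_indicator measurableSet_Ioi,
          hIoi, hIio]
        simp [Real.volume_Icc]
    _ ≤ ENNReal.ofReal (4 * ρ) := by
        rw [← ENNReal.ofReal_add (by linarith) (by linarith),
          ← ENNReal.ofReal_add (by linarith) (by linarith)]
        apply ENNReal.ofReal_le_ofReal; linarith

lemma gdp_tail (α ρ t : ℝ) (hα : 2 ≤ α) (hρ : 0 < ρ) (ht : 0 ≤ t) :
    gdpMeasure α ρ {x : ℝ | t < |x|} ≤
      ENNReal.ofReal (2 * α * (1 + t / ρ) ^ (-(α - 1))) := by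
  have hS : MeasurableSet {x : ℝ | t < |x|} :=
    measurableSet_lt measurable_const measurable_abs
  set c : ℝ := (α / (2 * ρ)) * (1 + t / ρ) ^ (-(α - 1)) with hc
  have hc0 : 0 ≤ c := by
    apply mul_nonneg (by positivity)
    apply Real.rpow_nonneg (by positivity)
  have hq : Measurable fun x : ℝ => ((1 + |x| / ρ) ^ 2)⁻¹ :=
    ((measurable_const.add (measurable_abs.div_const ρ)).pow_const 2).inv
  have hpt : ∀ x ∈ {x : ℝ | t < |x|},
      ENNReal.ofReal (gdpPdf α ρ x) ≤ ENNReal.ofReal (c * ((1 + |x| / ρ) ^ 2)⁻¹) := by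
    intro x hx
    apply ENNReal.ofReal_le_ofReal
    have habs : (0:ℝ) ≤ |x| / ρ := by positivity
    have hb1 : (1:ℝ) ≤ 1 + |x| / ρ := by linarith
    have hb0 : (0:ℝ) < 1 + |x| / ρ := lt_of_lt_of_le one_pos hb1
    have ht0 : (0:ℝ) < 1 + t / ρ := by positivity
    have hsplit : (1 + |x| / ρ) ^ (-(α + 1)) =
        (1 + |x| / ρ) ^ (-(α - 1)) * ((1 + |x| / ρ) ^ 2)⁻¹ := by
      rw [← rpow_neg_two_eq hb0.le, ← Real.rpow_add hb0]
      ring_nf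
    have hmono : (1 + |x| / ρ) ^ (-(α - 1)) ≤ (1 + t / ρ) ^ (-(α - 1)) := by
      apply Real.rpow_le_rpow_of_nonpos ht0
      · gcongr
        exact le_of_lt hx
      · linarith
    have hinv : (0:ℝ) ≤ ((1 + |x| / ρ) ^ 2)⁻¹ := by positivity
    calc gdpPdf α ρ x
        = (α / (2 * ρ)) * ((1 + |x| / ρ) ^ (-(α - 1)) * ((1 + |x| / ρ) ^ 2)⁻¹) := by
          rw [gdpPdf, hsplit]
      _ ≤ (α / (2 * ρ)) * ((1 + t / ρ) ^ (-(α - 1)) * ((1 + |x| / ρ) ^ 2)⁻¹) := by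
          apply mul_le_mul_of_nonneg_left _ (by positivity)
          exact mul_le_mul_of_nonneg_right hmono hinv
      _ = c * ((1 + |x| / ρ) ^ 2)⁻¹ := by rw [hc]; ring
  calc gdpMeasure α ρ {x : ℝ | t < |x|}
      = ∫⁻ x in {x : ℝ | t < |x|}, ENNReal.ofReal (gdpPdf α ρ x) ∂volume :=
        withDensity_apply _ hS
    _ ≤ ∫⁻ x in {x : ℝ | t < |x|},
          ENNReal.ofReal (c * ((1 + |x| / ρ) ^ 2)⁻¹) ∂volume :=
        setLIntegral_mono ((measurable_const.mul hq).ennreal_ofReal) hpt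
    _ ≤ ∫⁻ x : ℝ, ENNReal.ofReal (c * ((1 + |x| / ρ) ^ 2)⁻¹) ∂volume :=
        setLIntegral_le_lintegral _ _
    _ = ENNReal.ofReal c * ∫⁻ x : ℝ, ENNReal.ofReal (((1 + |x| / ρ) ^ 2)⁻¹) ∂volume := by
        simp_rw [ENNReal.ofReal_mul hc0]
        exact lintegral_const_mul _ hq.ennreal_ofReal
    _ ≤ ENNReal.ofReal c * ENNReal.ofReal (4 * ρ) :=
        mul_le_mul_right (aux_lintegral_inv_sq ρ hρ) _
    _ = ENNReal.ofReal (2 * α * (1 + t / ρ) ^ (-(α - 1))) := by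
        rw [← ENNReal.ofReal_mul hc0]
        congr 1
        rw [hc]
        field_simp
        ring

lemma tail_term_bound (δ ρ : ℝ) (hδ : 2 < δ) (hρ : 0 < ρ) :
    ∃ C₁ : ℝ, 1 ≤ C₁ ∧ ∀ k : ℕ, C₁ ≤ (k : ℝ) →
      2 * δ ^ k * (1 + (2⁻¹ : ℝ) ^ k / ρ) ^ (-(δ ^ k - 1)) ≤ Real.exp (-(2 * k)) := by
  set L := Real.log (δ / 2) with hL
  have hL0 : 0 < L := Real.log_pos (by linarith [hδ] )
  have hlogδ : 0 < Real.log δ := Real.log_pos (by linarith)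
  refine ⟨max (max 1 ρ⁻¹) (16 * ρ * (Real.log δ + 3) / L ^ 2), le_trans (le_max_left 1 ρ⁻¹) (le_max_left _ _), ?_⟩
  intro k hk
  have hk1 : (1:ℝ) ≤ k := le_trans (le_trans (le_max_left _ _) (le_max_left _ _)) hk
  have hkρ : ρ⁻¹ ≤ k := le_trans (le_trans (le_max_right _ _) (le_max_left _ _)) hk
  have hkL : 16 * ρ * (Real.log δ + 3) / L ^ 2 ≤ k := le_trans (le_max_right _ _) hk
  set x : ℝ := (2⁻¹ : ℝ) ^ k / ρ with hx
  have hx0 : 0 < x := by positivity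
  -- x ≤ 1
  have h2k : (k:ℝ) ≤ 2 ^ k := by
    exact_mod_cast le_of_lt (Nat.lt_two_pow_self (n := k))
  have hx1 : x ≤ 1 := by
    have hk0 : (0:ℝ) < k := by linarith
    have h1 : (2⁻¹:ℝ) ^ k = ((2:ℝ) ^ k)⁻¹ := by rw [inv_pow]
    have h2 : ((2:ℝ) ^ k)⁻¹ ≤ (k:ℝ)⁻¹ := by
      apply inv_anti₀ hk0 h2k
    have h3 : ((k:ℝ))⁻¹ ≤ ρ := by
      rw [inv_le_comm₀ hk0 hρ]
      exact hkρ
    rw [hx, h1, div_le_one hρ]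
    linarith
  -- δ^k ≥ 2
  have hδk2 : (2:ℝ) ≤ δ ^ k := by
    calc (2:ℝ) = 2 ^ 1 := by norm_num
      _ ≤ 2 ^ k := by
          apply pow_le_pow_right₀ (by norm_num)
          exact_mod_cast hk1
      _ ≤ δ ^ k := by
          apply pow_le_pow_left₀ (by norm_num) (le_of_lt hδ)
  have hδk0 : (0:ℝ) < δ ^ k := by positivity
  -- rewrite rpow as exp
  have hx01 : (0:ℝ) < 1 + x := by linarith
  have hrpow : (1 + x) ^ (-(δ ^ k - 1)) =
      Real.exp (-(δ ^ k - 1) * Real.log (1 + x)) := by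
    rw [Real.rpow_def_of_pos hx01, mul_comm]
  -- log bound
  have hlog : x / 2 ≤ Real.log (1 + x) := log_one_add_ge hx0.le hx1
  have hlog0 : 0 ≤ Real.log (1 + x) := Real.log_nonneg (by linarith)
  have hkey : (δ ^ k / 2) * (x / 2) ≤ (δ ^ k - 1) * Real.log (1 + x) := by
    apply mul_le_mul (by linarith) hlog (by positivity) (by linarith)
  have hδx : δ ^ k * x = (δ / 2) ^ k / ρ := by
    rw [hx, ← mul_div_assoc, ← mul_pow, ← div_eq_mul_inv]
  have hd2 : (0:ℝ) < δ / 2 := by linarith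
  have hexpL : (δ / 2) ^ k = Real.exp ((k:ℝ) * L) := by
    rw [hL, ← Real.log_pow, Real.exp_log (pow_pos hd2 k)]
  have hquad : ((k:ℝ) * L) ^ 2 / 4 ≤ (δ / 2) ^ k := by
    rw [hexpL]
    exact exp_sq_quarter (by positivity)
  have hδexp : δ ^ k = Real.exp ((k:ℝ) * Real.log δ) := by
    rw [← Real.log_pow, Real.exp_log hδk0]
  have hmain : (k:ℝ) * Real.log δ + 2 * k + 1 ≤ ((k:ℝ) * L) ^ 2 / (16 * ρ) := by
    have h1 : 16 * ρ * (Real.log δ + 3) ≤ (k:ℝ) * L ^ 2 := by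
      rw [div_le_iff₀ (by positivity)] at hkL
      linarith
    have h2 : (k:ℝ) * (16 * ρ * (Real.log δ + 3)) ≤ (k:ℝ) * ((k:ℝ) * L ^ 2) := by
      apply mul_le_mul_of_nonneg_left h1 (by linarith)
    have h3 : (k:ℝ) * (Real.log δ + 3) ≤ ((k:ℝ) * L) ^ 2 / (16 * ρ) := by
      rw [le_div_iff₀ (by positivity)]
      nlinarith
    nlinarith [hlogδ]
  have hq : δ ^ k / 2 * (x / 2) = (δ / 2) ^ k / (4 * ρ) := by
    calc δ ^ k / 2 * (x / 2) = (δ ^ k * x) / 4 := by ring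
      _ = ((δ / 2) ^ k / ρ) / 4 := by rw [hδx]
      _ = (δ / 2) ^ k / (4 * ρ) := by ring
  have h5 : ((k:ℝ) * L) ^ 2 / (16 * ρ) ≤ (δ / 2) ^ k / (4 * ρ) := by
    rw [show ((k:ℝ) * L) ^ 2 / (16 * ρ) = (((k:ℝ) * L) ^ 2 / 4) / (4 * ρ) by ring]
    gcongr
  have hlog2 : Real.log 2 ≤ 1 := by
    rw [← Real.log_exp 1]
    exact Real.log_le_log two_pos (by linarith [Real.add_one_le_exp 1])
  rw [hrpow]
  calc 2 * δ ^ k * Real.exp (-(δ ^ k - 1) * Real.log (1 + x))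
      ≤ 2 * δ ^ k * Real.exp (-(δ ^ k / 2 * (x / 2))) := by
        apply mul_le_mul_of_nonneg_left _ (by positivity)
        apply Real.exp_le_exp.mpr
        linarith [hkey]
    _ = Real.exp (Real.log 2 + (k:ℝ) * Real.log δ + -(δ ^ k / 2 * (x / 2))) := by
        rw [Real.exp_add, Real.exp_add, Real.exp_log two_pos, ← hδexp]
    _ ≤ Real.exp (-(2 * (k:ℝ))) := by
        apply Real.exp_le_exp.mpr
        have h6 : (k:ℝ) * Real.log δ + 2 * k + 1 ≤ δ ^ k / 2 * (x / 2) := by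
          rw [hq]; linarith
        linarith

set_option maxHeartbeats 2000000 in
theorem gdp_truncation_close_condition_I {Ω : Type*} [MeasurableSpace Ω] (μ : Measure Ω)
    [IsProbabilityMeasure μ] (δ ρ : ℝ) (hδ : 2 < δ) (hρ : 0 < ρ)
    (P : ℕ) (hP : 0 < P) (Λ : Fin P × ℕ → Ω → ℝ) (hmeas : ∀ pk, Measurable (Λ pk))
    (hindep : ProbabilityTheory.iIndepFun Λ μ)
    (hlaw : ∀ (p : Fin P) (k : ℕ), 1 ≤ k →
      Measure.map (Λ (p, k)) μ = gdpMeasure (δ ^ k) ρ) :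
    ∃ C : ℝ, 0 < C ∧ ∀ ε : ℝ, 0 < ε → ε < 1 → ∀ K₀ : ℕ,
      C * (1 + Real.log ((P : ℝ) / ε ^ 2)) ≤ (K₀ : ℝ) → ∀ K : ℕ, K₀ ≤ K →
      ENNReal.ofReal (1 - ε) <
        μ {ω | ∀ i j : Fin P,
          Summable (fun k : ℕ => |Λ (i, k + K + 1) ω| * |Λ (j, k + K + 1) ω|) ∧
          (∑' k : ℕ, |Λ (i, k + K + 1) ω| * |Λ (j, k + K + 1) ω|) < ε} := by
  obtain ⟨C₁, hC₁1, hC₁⟩ := tail_term_bound δ ρ hδ hρ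
  refine ⟨C₁, by linarith, ?_⟩
  intro ε hε0 hε1 K₀ hK₀ K hKK
  have hP1 : (1:ℝ) ≤ P := by exact_mod_cast hP
  have hε2 : (0:ℝ) < ε ^ 2 := by positivity
  have hPε1 : (1:ℝ) ≤ (P:ℝ) / ε ^ 2 := by
    rw [le_div_iff₀ hε2]; nlinarith
  have hlogPε : 0 ≤ Real.log ((P:ℝ) / ε ^ 2) := Real.log_nonneg hPε1
  have hKK' : (K₀:ℝ) ≤ (K:ℝ) := by exact_mod_cast hKK
  have hK1 : 1 + Real.log ((P:ℝ) / ε ^ 2) ≤ (K:ℝ) := by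
    nlinarith
  have hCK : C₁ ≤ (K:ℝ) := by nlinarith
  have hexpK : Real.exp (-(K:ℝ)) ≤ Real.exp (-1) * (ε ^ 2 / P) := by
    have h1 : Real.exp (-(K:ℝ)) ≤ Real.exp (-(1 + Real.log ((P:ℝ) / ε ^ 2))) :=
      Real.exp_le_exp.mpr (by linarith)
    have h2 : Real.exp (-Real.log ((P:ℝ) / ε ^ 2)) = ε ^ 2 / P := by
      rw [Real.exp_neg, Real.exp_log (by positivity), inv_div]
    rw [show -(1 + Real.log ((P:ℝ) / ε ^ 2)) = -1 + -Real.log ((P:ℝ) / ε ^ 2) by ring,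
      Real.exp_add, h2] at h1
    exact h1
  have hexp1 : Real.exp (-1:ℝ) ≤ 2⁻¹ := by
    rw [Real.exp_neg]
    rw [inv_le_comm₀ (Real.exp_pos 1) (by norm_num)]
    linarith [Real.add_one_le_exp 1]
  have hKC₁ : ∀ n : ℕ, C₁ ≤ ((n + K + 1 : ℕ) : ℝ) := by
    intro n
    push_cast
    have : (0:ℝ) ≤ n := Nat.cast_nonneg n
    linarith
  -- the good event
  set G : Set Ω := ⋂ pk : Fin P × ℕ,
    {ω | |Λ (pk.1, pk.2 + K + 1) ω| ≤ (2⁻¹ : ℝ) ^ (pk.2 + K + 1)} with hGdef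
  have hGmeas : MeasurableSet G :=
    MeasurableSet.iInter fun pk =>
      measurableSet_le (hmeas _).abs measurable_const
  -- inclusion into the target event
  have hsub : G ⊆ {ω | ∀ i j : Fin P,
      Summable (fun k : ℕ => |Λ (i, k + K + 1) ω| * |Λ (j, k + K + 1) ω|) ∧
      (∑' k : ℕ, |Λ (i, k + K + 1) ω| * |Λ (j, k + K + 1) ω|) < ε} := by
    intro ω hω
    simp only [hGdef, mem_iInter, mem_setOf_eq] at hω
    intro i j
    have hb : ∀ n : ℕ, |Λ (i, n + K + 1) ω| * |Λ (j, n + K + 1) ω| ≤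
        (4⁻¹ : ℝ) ^ (K + 1) * (4⁻¹) ^ n := by
      intro n
      have h1 := hω (i, n)
      have h2 := hω (j, n)
      calc |Λ (i, n + K + 1) ω| * |Λ (j, n + K + 1) ω|
          ≤ (2⁻¹ : ℝ) ^ (n + K + 1) * (2⁻¹) ^ (n + K + 1) :=
            mul_le_mul h1 h2 (abs_nonneg _) (by positivity)
        _ = (4⁻¹ : ℝ) ^ (n + (K + 1)) := by
            rw [← mul_pow]; norm_num; rw [Nat.add_assoc]
        _ = (4⁻¹ : ℝ) ^ (K + 1) * (4⁻¹) ^ n := by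
            rw [pow_add]; ring
    have hsb : Summable (fun n : ℕ => (4⁻¹ : ℝ) ^ (K + 1) * (4⁻¹) ^ n) :=
      (summable_geometric_of_lt_one (by norm_num) (by norm_num)).mul_left _
    have hs : Summable (fun n : ℕ => |Λ (i, n + K + 1) ω| * |Λ (j, n + K + 1) ω|) :=
      Summable.of_nonneg_of_le (fun n => by positivity) hb hsb
    refine ⟨hs, ?_⟩
    have htsum := Summable.tsum_le_tsum hb hs hsb
    rw [tsum_mul_left, tsum_geometric_of_lt_one (by norm_num) (by norm_num)] at htsum
    have h4inv : (4⁻¹ : ℝ) ≤ Real.exp (-1) := by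
      rw [Real.exp_neg, le_inv_comm₀ (by norm_num) (Real.exp_pos 1)]
      rw [show ((4:ℝ)⁻¹)⁻¹ = 4 by norm_num]
      calc Real.exp 1 ≤ Real.exp 1 * 1 := by norm_num
        _ ≤ 4 := by nlinarith [Real.exp_one_lt_d9]
    have h4K : ((4:ℝ)⁻¹) ^ (K + 1) ≤ Real.exp (-(K:ℝ)) := by
      calc ((4:ℝ)⁻¹) ^ (K + 1) ≤ (4⁻¹ : ℝ) ^ K := by
            rw [pow_succ]
            nlinarith [pow_nonneg (show (0:ℝ) ≤ 4⁻¹ by norm_num) K]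
        _ ≤ (Real.exp (-1)) ^ K := pow_le_pow_left₀ (by norm_num) h4inv K
        _ = Real.exp (-(K:ℝ)) := by
            rw [← Real.exp_nat_mul]; congr 1; ring
    have hεb : ((4:ℝ)⁻¹) ^ (K + 1) * ((1:ℝ) - 4⁻¹)⁻¹ < ε := by
      have hq : Real.exp (-(K:ℝ)) ≤ 2⁻¹ * ε ^ 2 := by
        calc Real.exp (-(K:ℝ)) ≤ Real.exp (-1) * (ε ^ 2 / P) := hexpK
          _ ≤ 2⁻¹ * ε ^ 2 := by
              have hd : ε ^ 2 / P ≤ ε ^ 2 := by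
                apply div_le_self (le_of_lt hε2) hP1
              have := Real.exp_pos (-1:ℝ)
              nlinarith
      have hnum : ((1:ℝ) - 4⁻¹)⁻¹ = 4 / 3 := by norm_num
      rw [hnum]
      nlinarith [pow_nonneg (show (0:ℝ) ≤ 4⁻¹ by norm_num) (K+1)]
    exact lt_of_le_of_lt htsum hεb
  -- probability of the complement
  have hcompl : Gᶜ = ⋃ pk : Fin P × ℕ,
      {ω | (2⁻¹ : ℝ) ^ (pk.2 + K + 1) < |Λ (pk.1, pk.2 + K + 1) ω|} := by
    rw [hGdef, compl_iInter]
    apply iUnion_congr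
    intro pk
    ext ω
    simp [not_le]
  have hbadk : ∀ pk : Fin P × ℕ,
      μ {ω | (2⁻¹ : ℝ) ^ (pk.2 + K + 1) < |Λ (pk.1, pk.2 + K + 1) ω|} ≤
        ENNReal.ofReal (Real.exp (-(2 * ((pk.2 + K + 1 : ℕ) : ℝ)))) := by
    rintro ⟨p, n⟩
    dsimp only
    have hSm : MeasurableSet {x : ℝ | (2⁻¹ : ℝ) ^ (n + K + 1) < |x|} :=
      measurableSet_lt measurable_const measurable_abs
    have hpre : {ω | (2⁻¹ : ℝ) ^ (n + K + 1) < |Λ (p, n + K + 1) ω|} =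
        Λ (p, n + K + 1) ⁻¹' {x : ℝ | (2⁻¹ : ℝ) ^ (n + K + 1) < |x|} := rfl
    rw [hpre, ← Measure.map_apply (hmeas _) hSm, hlaw p (n + K + 1) (by omega)]
    have hδm2 : (2:ℝ) ≤ δ ^ (n + K + 1) := by
      calc (2:ℝ) = 2 ^ 1 := by norm_num
        _ ≤ 2 ^ (n + K + 1) := by
            apply pow_le_pow_right₀ (by norm_num) (by omega)
        _ ≤ δ ^ (n + K + 1) := by
            apply pow_le_pow_left₀ (by norm_num) (le_of_lt hδ)
    refine le_trans (gdp_tail _ _ _ hδm2 hρ (by positivity)) ?_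
    apply ENNReal.ofReal_le_ofReal
    exact hC₁ (n + K + 1) (hKC₁ n)
  have hμGc : μ Gᶜ ≤ ENNReal.ofReal (ε / 2) := by
    rw [hcompl]
    refine le_trans (measure_iUnion_le _) ?_
    have hterm : ∀ pk : Fin P × ℕ,
        μ {ω | (2⁻¹ : ℝ) ^ (pk.2 + K + 1) < |Λ (pk.1, pk.2 + K + 1) ω|} ≤
          ENNReal.ofReal (Real.exp (-(2 * ((K:ℝ) + 1)))) *
            ENNReal.ofReal (Real.exp (-2)) ^ pk.2 := by
      intro pk
      refine le_trans (hbadk pk) ?_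
      rw [← ENNReal.ofReal_pow (Real.exp_nonneg _), ← ENNReal.ofReal_mul (Real.exp_nonneg _)]
      apply ENNReal.ofReal_le_ofReal
      rw [← Real.exp_nat_mul, ← Real.exp_add]
      apply Real.exp_le_exp.mpr
      push_cast
      linarith
    refine le_trans (ENNReal.tsum_le_tsum hterm) ?_
    rw [ENNReal.tsum_prod']
    have hinner : (∑' n : ℕ, ENNReal.ofReal (Real.exp (-(2 * ((K:ℝ) + 1)))) *
        ENNReal.ofReal (Real.exp (-2)) ^ n) =
        ENNReal.ofReal (Real.exp (-(2 * ((K:ℝ) + 1)))) *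
          (1 - ENNReal.ofReal (Real.exp (-2)))⁻¹ := by
      rw [ENNReal.tsum_mul_left, ENNReal.tsum_geometric]
    have houter : (∑' p : Fin P, (∑' n : ℕ,
        ENNReal.ofReal (Real.exp (-(2 * ((K:ℝ) + 1)))) *
          ENNReal.ofReal (Real.exp (-2)) ^ n)) =
        (P : ℝ≥0∞) * (ENNReal.ofReal (Real.exp (-(2 * ((K:ℝ) + 1)))) *
          (1 - ENNReal.ofReal (Real.exp (-2)))⁻¹) := by
      rw [tsum_fintype]
      simp only [hinner, Finset.sum_const, Finset.card_univ, Fintype.card_fin, nsmul_eq_mul]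
    rw [houter]
    have hgeo : (1 - ENNReal.ofReal (Real.exp (-2)))⁻¹ ≤ 2 := by
      have hr : Real.exp (-2:ℝ) ≤ 2⁻¹ := by
        rw [Real.exp_neg, inv_le_comm₀ (Real.exp_pos 2) (by norm_num)]
        linarith [Real.add_one_le_exp 2]
      have h1 : ENNReal.ofReal (Real.exp (-2)) ≤ 2⁻¹ := by
        calc ENNReal.ofReal (Real.exp (-2)) ≤ ENNReal.ofReal 2⁻¹ :=
              ENNReal.ofReal_le_ofReal hr
          _ = 2⁻¹ := by
              rw [ENNReal.ofReal_inv_of_pos two_pos, ENNReal.ofReal_ofNat]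
      have h3 : (1:ℝ≥0∞) - 2⁻¹ = 2⁻¹ := by
        rw [← ENNReal.inv_two_add_inv_two, ENNReal.add_sub_cancel_right (by norm_num)]
      have h2 : (2⁻¹ : ℝ≥0∞) ≤ 1 - ENNReal.ofReal (Real.exp (-2)) := by
        rw [← h3]
        exact tsub_le_tsub_left h1 1
      calc (1 - ENNReal.ofReal (Real.exp (-2)))⁻¹ ≤ ((2:ℝ≥0∞)⁻¹)⁻¹ :=
            ENNReal.inv_le_inv' h2
        _ = 2 := inv_inv 2
    have hfinal : (P:ℝ) * (Real.exp (-(2 * ((K:ℝ) + 1))) * 2) ≤ ε / 2 := by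
      set s : ℝ := Real.exp (-1) with hs
      set u : ℝ := ε ^ 2 / (P:ℝ) with hu
      have hs0 : 0 < s := Real.exp_pos _
      have hu0 : 0 < u := by positivity
      have huε : u ≤ ε ^ 2 := div_le_self (le_of_lt hε2) hP1
      have huP : u * (P:ℝ) = ε ^ 2 := by
        rw [hu]; field_simp
      have hA : Real.exp (-(2 * ((K:ℝ) + 1))) ≤ Real.exp (-(K:ℝ)) * Real.exp (-(K:ℝ)) := by
        rw [← Real.exp_add]
        apply Real.exp_le_exp.mpr
        have hK1' : (1:ℝ) ≤ K := by linarith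
        linarith
      have hB : Real.exp (-(K:ℝ)) * Real.exp (-(K:ℝ)) ≤ (s * u) ^ 2 := by
        rw [sq]
        exact mul_le_mul hexpK hexpK (Real.exp_nonneg _) (by positivity)
      have e1 : (P:ℝ) * ((s * u) ^ 2 * 2) = 2 * s ^ 2 * u * ε ^ 2 := by
        rw [← huP]; ring
      have e2 : 2 * s ^ 2 * u * ε ^ 2 ≤ 2 * (2⁻¹:ℝ) ^ 2 * ε ^ 2 * ε ^ 2 := by
        gcongr
      have hsq : ε ^ 2 ≤ ε := by nlinarith
      have h4 : ε ^ 2 * ε ^ 2 ≤ ε := by nlinarith [hε2.le]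
      have e3 : 2 * (2⁻¹:ℝ) ^ 2 * ε ^ 2 * ε ^ 2 ≤ ε / 2 := by
        nlinarith [h4]
      have e0 : (P:ℝ) * (Real.exp (-(2 * ((K:ℝ) + 1))) * 2) ≤ (P:ℝ) * ((s * u) ^ 2 * 2) := by
        apply mul_le_mul_of_nonneg_left _ (by positivity)
        have := hA.trans hB
        linarith
      linarith
    calc (P : ℝ≥0∞) * (ENNReal.ofReal (Real.exp (-(2 * ((K:ℝ) + 1)))) *
          (1 - ENNReal.ofReal (Real.exp (-2)))⁻¹)
        ≤ (P : ℝ≥0∞) * (ENNReal.ofReal (Real.exp (-(2 * ((K:ℝ) + 1)))) * 2) :=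
          mul_le_mul_right (mul_le_mul_right hgeo _) _
      _ = ENNReal.ofReal ((P:ℝ) * (Real.exp (-(2 * ((K:ℝ) + 1))) * 2)) := by
          rw [ENNReal.ofReal_mul (by positivity), ENNReal.ofReal_mul (Real.exp_nonneg _),
            ENNReal.ofReal_natCast, ENNReal.ofReal_ofNat]
      _ ≤ ENNReal.ofReal (ε / 2) := ENNReal.ofReal_le_ofReal hfinal
  -- conclusion
  have hUnionBound : (1:ℝ≥0∞) ≤ μ G + ENNReal.ofReal (ε / 2) := by
    calc (1:ℝ≥0∞) = μ univ := measure_univ.symm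
      _ = μ (G ∪ Gᶜ) := by rw [union_compl_self]
      _ ≤ μ G + μ Gᶜ := measure_union_le _ _
      _ ≤ μ G + ENNReal.ofReal (ε / 2) := add_le_add_right hμGc _
  have hμG : ENNReal.ofReal (1 - ε / 2) ≤ μ G := by
    rw [ENNReal.ofReal_sub _ (by linarith), ENNReal.ofReal_one]
    exact tsub_le_iff_right.mpr hUnionBound
  have hstrict : ENNReal.ofReal (1 - ε) < ENNReal.ofReal (1 - ε / 2) := by
    rw [ENNReal.ofReal_lt_ofReal_iff (by linarith)]
    linarith
  exact lt_of_lt_of_le hstrict (hμG.trans (measure_mono hsub))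
end

section
/- Let δ > 2 and 0 < ρ < 1, set α_k = δ and η_k = ρ^k for k ≥ 1, fix P ≥ 1, and let (λ_{pk})_{1≤p≤P, k≥1} be mutually independent real random variables with λ_{pk} distributed as GDP(α_k, η_k). Then there exists a constant C > 0 depending only on δ and ρ such that for every ε ∈ (0, 1): if K₀ is any integer with K₀ ≥ C·(1 + log(P/ε²)), then for every K ≥ K₀, with probability greater than 1 − ε, for all i, j ∈ {1, …, P} the series ∑_{k=K+1}^∞ |λ_{ik}||λ_{jk}| converges and is strictly less than ε. In particular K₀ can be taken of order (log(1/ρ))^{−1} log(P/ε²). -/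
open MeasureTheory ProbabilityTheory
open scoped ENNReal

open Set in
lemma lintegral_neg_volume (f : ℝ → ℝ≥0∞) : ∫⁻ (x : ℝ), f (-x) = ∫⁻ (x : ℝ), f x := by
  calc ∫⁻ (x : ℝ), f (-x) = ∫⁻ x, f x ∂(Measure.map (MeasurableEquiv.neg ℝ) volume) := by
        rw [MeasureTheory.lintegral_map_equiv]
        rfl
    _ = ∫⁻ (x : ℝ), f x := by
        congr 1
        exact Measure.map_neg_eq_self volume

open Set in
lemma gdp_tail_s10 {δ η t : ℝ} (hδ : 1 < δ) (hη : 0 < η) (ht : 0 < t) :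
    gdpMeasure δ η {x : ℝ | t < |x|} ≤ ENNReal.ofReal ((η / t) ^ δ) := by
  have hsetEq : {x : ℝ | t < |x|} = Iio (-t) ∪ Ioi t := by
    ext x
    simp only [mem_setOf_eq, lt_abs, mem_union, mem_Iio, mem_Ioi]
    constructor
    · rintro (h | h)
      · right; exact h
      · left; linarith
    · rintro (h | h)
      · right; linarith
      · left; exact h
  have hmeasSet : MeasurableSet {x : ℝ | t < |x|} := by
    rw [hsetEq]; exact measurableSet_Iio.union measurableSet_Ioi
  have hdisj : Disjoint (Iio (-t)) (Ioi t) :=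
    (Set.Iic_disjoint_Ioi (by linarith)).mono_left Set.Iio_subset_Iic_self
  have key : ∫⁻ x in Ioi t, ENNReal.ofReal (gdpPdf δ η x)
      ≤ ENNReal.ofReal ((η / t) ^ δ / 2) := by
    have hg : ∀ x ∈ Ioi t, gdpPdf δ η x ≤ δ / (2 * η) * η ^ (δ + 1) * x ^ (-(δ + 1)) := by
      intro x hx
      have hx0 : 0 < x := ht.trans hx
      have h1 : (1 + |x| / η) ^ (-(δ + 1)) ≤ (x / η) ^ (-(δ + 1)) := by
        rw [abs_of_pos hx0]
        apply Real.rpow_le_rpow_of_nonpos (by positivity) (by linarith [div_nonneg hx0.le hη.le])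
        linarith
      have h2 : (x / η) ^ (-(δ + 1)) = η ^ (δ + 1) * x ^ (-(δ + 1)) := by
        rw [Real.div_rpow hx0.le hη.le, Real.rpow_neg hx0.le, Real.rpow_neg hη.le]
        field_simp
      calc gdpPdf δ η x ≤ δ / (2 * η) * ((x / η) ^ (-(δ + 1))) := by
            unfold gdpPdf
            apply mul_le_mul_of_nonneg_left h1 (by positivity)
        _ = δ / (2 * η) * η ^ (δ + 1) * x ^ (-(δ + 1)) := by rw [h2]; ring
    calc ∫⁻ x in Ioi t, ENNReal.ofReal (gdpPdf δ η x)
        ≤ ∫⁻ x in Ioi t, ENNReal.ofReal (δ / (2 * η) * η ^ (δ + 1) * x ^ (-(δ + 1))) := by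
          apply setLIntegral_mono' measurableSet_Ioi
          intro x hx
          exact ENNReal.ofReal_le_ofReal (hg x hx)
      _ = ENNReal.ofReal (∫ x in Ioi t, δ / (2 * η) * η ^ (δ + 1) * x ^ (-(δ + 1))) := by
          rw [ofReal_integral_eq_lintegral_ofReal]
          · exact (integrableOn_Ioi_rpow_of_lt (by linarith) ht).const_mul _
          · filter_upwards [ae_restrict_mem measurableSet_Ioi] with x hx
            have hx0 : (0:ℝ) < x := ht.trans hx
            positivity
      _ = ENNReal.ofReal ((η / t) ^ δ / 2) := by
          congr 1
          rw [MeasureTheory.integral_const_mul, integral_Ioi_rpow_of_lt (by linarith) ht]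
          have h1 : -(δ + 1) + 1 = -δ := by ring
          rw [h1]
          have h2 : η ^ (δ + 1) = η ^ δ * η := by
            rw [Real.rpow_add hη, Real.rpow_one]
          have h3 : (η / t) ^ δ = η ^ δ * t ^ (-δ) := by
            rw [Real.div_rpow hη.le ht.le, Real.rpow_neg ht.le]
            ring
          rw [h2, h3, Real.rpow_neg ht.le]
          have hδ0 : δ ≠ 0 := by linarith
          have htδ : (0:ℝ) < t ^ δ := Real.rpow_pos_of_pos ht δ
          field_simp
  have neg_eq : ∫⁻ x in Iio (-t), ENNReal.ofReal (gdpPdf δ η x)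
      = ∫⁻ x in Ioi t, ENNReal.ofReal (gdpPdf δ η x) := by
    have h1 : ∀ x : ℝ, (Iio (-t)).indicator (fun y => ENNReal.ofReal (gdpPdf δ η y)) (-x)
        = (Ioi t).indicator (fun y => ENNReal.ofReal (gdpPdf δ η y)) x := by
      intro x
      by_cases hx : t < x
      · rw [Set.indicator_of_mem (by simp [mem_Iio]; linarith),
          Set.indicator_of_mem (by simpa [mem_Ioi] using hx)]
        simp [gdpPdf, abs_neg]
      · rw [Set.indicator_of_notMem (by simp [mem_Iio]; linarith),
          Set.indicator_of_notMem (by simpa [mem_Ioi] using hx)]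
    calc ∫⁻ x in Iio (-t), ENNReal.ofReal (gdpPdf δ η x)
        = ∫⁻ x, (Iio (-t)).indicator (fun y => ENNReal.ofReal (gdpPdf δ η y)) x := by
          exact (lintegral_indicator measurableSet_Iio _).symm
      _ = ∫⁻ x, (Iio (-t)).indicator (fun y => ENNReal.ofReal (gdpPdf δ η y)) (-x) := by
          exact (lintegral_neg_volume _).symm
      _ = ∫⁻ x, (Ioi t).indicator (fun y => ENNReal.ofReal (gdpPdf δ η y)) x := by
          simp_rw [h1]
      _ = ∫⁻ x in Ioi t, ENNReal.ofReal (gdpPdf δ η x) := by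
          exact lintegral_indicator measurableSet_Ioi _
  rw [gdpMeasure, withDensity_apply _ hmeasSet, hsetEq,
    lintegral_union measurableSet_Ioi hdisj, neg_eq]
  calc _ ≤ ENNReal.ofReal ((η / t) ^ δ / 2) + ENNReal.ofReal ((η / t) ^ δ / 2) :=
        add_le_add key key
    _ = ENNReal.ofReal ((η / t) ^ δ) := by
        rw [← ENNReal.ofReal_add (by positivity) (by positivity)]
        norm_num

theorem gdp_truncation_close_condition_II {Ω : Type*} [MeasurableSpace Ω] (μ : Measure Ω)
    [IsProbabilityMeasure μ] (δ ρ : ℝ) (hδ : 2 < δ) (hρ0 : 0 < ρ) (hρ1 : ρ < 1)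
    (P : ℕ) (hP : 0 < P) (Λ : Fin P × ℕ → Ω → ℝ) (hmeas : ∀ pk, Measurable (Λ pk))
    (hindep : ProbabilityTheory.iIndepFun Λ μ)
    (hlaw : ∀ (p : Fin P) (k : ℕ), 1 ≤ k →
      Measure.map (Λ (p, k)) μ = gdpMeasure δ (ρ ^ k)) :
    ∃ C : ℝ, 0 < C ∧ ∀ ε : ℝ, 0 < ε → ε < 1 → ∀ K₀ : ℕ,
      C * (1 + Real.log ((P : ℝ) / ε ^ 2)) ≤ (K₀ : ℝ) → ∀ K : ℕ, K₀ ≤ K →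
      ENNReal.ofReal (1 - ε) <
        μ {ω | ∀ i j : Fin P,
          Summable (fun k : ℕ => |Λ (i, k + K + 1) ω| * |Λ (j, k + K + 1) ω|) ∧
          (∑' k : ℕ, |Λ (i, k + K + 1) ω| * |Λ (j, k + K + 1) ω|) < ε} := by
  have hρ' : 0 < 1 - ρ := by linarith
  set r : ℝ := Real.sqrt ρ with hrdef
  have hr0 : 0 < r := Real.sqrt_pos.2 hρ0
  have hr2 : r ^ 2 = ρ := Real.sq_sqrt hρ0.le
  have hr1 : r < 1 := by nlinarith
  have h2pos : (0:ℝ) < Real.log 2 := Real.log_pos (by norm_num)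
  have h3pos : (0:ℝ) ≤ Real.log (1 / (1 - ρ)) :=
    Real.log_nonneg (by rw [le_div_iff₀ hρ']; linarith)
  have hlogρ : 0 < Real.log (1 / ρ) := Real.log_pos (by rw [lt_div_iff₀ hρ0]; linarith)
  refine ⟨(1 + Real.log 2 + Real.log (1 / (1 - ρ))) / Real.log (1 / ρ), by positivity, ?_⟩
  intro ε hε0 hε1 K₀ hK₀ K hKK
  have hP1 : (1:ℝ) ≤ P := by exact_mod_cast hP
  -- the key numeric consequence of K being large
  have hρK : ρ ^ K ≤ ε ^ 2 * (1 - ρ) / (2 * P) := by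
    have hB : 0 < ε ^ 2 * (1 - ρ) / (2 * P) := by positivity
    rw [← Real.exp_log (pow_pos hρ0 K), ← Real.exp_log hB, Real.exp_le_exp, Real.log_pow]
    have e1 : Real.log (ε ^ 2 * (1 - ρ) / (2 * (P:ℝ)))
        = Real.log (ε ^ 2) + Real.log (1 - ρ) - (Real.log 2 + Real.log P) := by
      rw [Real.log_div (by positivity) (by positivity),
        Real.log_mul (by positivity) (by positivity),
        Real.log_mul (by norm_num) (by positivity)]
    have e2 : Real.log (1 / (1 - ρ)) = -Real.log (1 - ρ) := by rw [one_div, Real.log_inv]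
    have e3 : Real.log (1 / ρ) = -Real.log ρ := by rw [one_div, Real.log_inv]
    have e4 : Real.log ((P:ℝ) / ε ^ 2) = Real.log P - Real.log (ε ^ 2) :=
      Real.log_div (by positivity) (by positivity)
    have hC : (1 + Real.log 2 + Real.log (1 / (1 - ρ))) / Real.log (1 / ρ)
        * (1 + Real.log ((P:ℝ) / ε ^ 2)) ≤ (K : ℝ) :=
      le_trans hK₀ (by exact_mod_cast Nat.cast_le.mpr hKK)
    have hL : 0 ≤ Real.log ((P:ℝ) / ε ^ 2) :=
      Real.log_nonneg (by
        rw [le_div_iff₀ (by positivity)]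
        linarith only [pow_le_one₀ hε0.le hε1.le (n := 2), hP1])
    have hK1 : (1 + Real.log 2 + Real.log (1 / (1 - ρ))) * (1 + Real.log ((P:ℝ) / ε ^ 2))
        ≤ (K:ℝ) * Real.log (1 / ρ) := by
      rw [div_mul_eq_mul_div, div_le_iff₀ hlogρ] at hC
      linarith
    have hK2 : Real.log 2 + Real.log (1 / (1 - ρ)) + Real.log ((P:ℝ) / ε ^ 2)
        ≤ (K:ℝ) * Real.log (1 / ρ) := by
      linarith only [hK1, mul_nonneg h2pos.le hL, mul_nonneg h3pos hL]
    rw [e1]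
    rw [e2, e4, e3] at hK2
    linarith
  have hρK2 : ρ ^ K * (2 * P) ≤ ε ^ 2 * (1 - ρ) := by
    rwa [← le_div_iff₀ (by positivity)]
  have ha0 : (0:ℝ) ≤ ρ ^ K := pow_nonneg hρ0.le K
  have key0 : 2 * ρ ^ K ≤ ε ^ 2 * (1 - ρ) := by
    have f1 := mul_le_mul_of_nonneg_left (by linarith only [hP1] : (2:ℝ) ≤ 2 * P) ha0
    linarith only [f1, hρK2]
  have haρ : ρ ^ K * ρ ≤ ρ ^ K := mul_le_of_le_one_right ha0 hρ1.le
  have hPa : (P:ℝ) * (ρ ^ K * ρ) ≤ (P:ℝ) * ρ ^ K :=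
    mul_le_mul_of_nonneg_left haρ (by positivity)
  have g1 : ε ^ 2 < 2 * ε := by
    have := mul_lt_mul_of_pos_left (show ε < 2 by linarith only [hε1]) hε0
    rw [sq]; linarith only [this]
  have g2 : ε ^ 2 * (1 - ρ) < 2 * ε * (1 - ρ) := mul_lt_mul_of_pos_right g1 hρ'
  have g3 : ε ^ 2 * (1 - ρ) ≤ ε * (1 - ρ) := by
    refine mul_le_mul_of_nonneg_right ?_ hρ'.le
    rw [sq]; exact mul_le_of_le_one_right hε0.le hε1.le
  have h5 : ρ ^ (K + 1) < ε * (1 - ρ) := by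
    rw [pow_succ]
    linarith only [haρ, key0, g2]
  have h6 : (P:ℝ) * ρ ^ (K + 1) ≤ ε / 2 * (1 - ρ) := by
    rw [pow_succ]
    linarith only [hPa, hρK2, g3]
  have hεb : ρ ^ (K + 1) * (1 - ρ)⁻¹ < ε := by
    rw [← div_eq_mul_inv, div_lt_iff₀ hρ']
    exact h5
  have hPb : (P:ℝ) * (ρ ^ (K + 1) * (1 - ρ)⁻¹) ≤ ε / 2 := by
    rw [← mul_assoc, ← div_eq_mul_inv, div_le_iff₀ hρ']
    exact h6
  have hgeom : Summable (fun k : ℕ => ρ ^ (k + K + 1)) := by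
    refine ((summable_geometric_of_lt_one hρ0.le hρ1).mul_left (ρ ^ (K + 1))).congr fun k => ?_
    ring
  have hsum : (∑' k : ℕ, ρ ^ (k + K + 1)) = ρ ^ (K + 1) * (1 - ρ)⁻¹ := by
    calc (∑' k : ℕ, ρ ^ (k + K + 1)) = ∑' k : ℕ, ρ ^ (K + 1) * ρ ^ k := by
          congr 1; funext k; ring
      _ = ρ ^ (K + 1) * ∑' k : ℕ, ρ ^ k := tsum_mul_left
      _ = ρ ^ (K + 1) * (1 - ρ)⁻¹ := by rw [tsum_geometric_of_lt_one hρ0.le hρ1]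
  set G : Set Ω := ⋂ (p : Fin P) (k : ℕ), {ω | |Λ (p, k + K + 1) ω| ≤ r ^ (k + K + 1)}
    with hGdef
  have hGm : MeasurableSet G :=
    MeasurableSet.iInter fun p => MeasurableSet.iInter fun k =>
      measurableSet_le (hmeas _).abs measurable_const
  have hGsub : G ⊆ {ω | ∀ i j : Fin P,
      Summable (fun k : ℕ => |Λ (i, k + K + 1) ω| * |Λ (j, k + K + 1) ω|) ∧
      (∑' k : ℕ, |Λ (i, k + K + 1) ω| * |Λ (j, k + K + 1) ω|) < ε} := by
    intro ω hω
    simp only [hGdef, Set.mem_iInter, Set.mem_setOf_eq] at hω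
    intro i j
    have hb : ∀ k : ℕ, |Λ (i, k + K + 1) ω| * |Λ (j, k + K + 1) ω| ≤ ρ ^ (k + K + 1) := by
      intro k
      calc |Λ (i, k + K + 1) ω| * |Λ (j, k + K + 1) ω|
          ≤ r ^ (k + K + 1) * r ^ (k + K + 1) :=
            mul_le_mul (hω i k) (hω j k) (abs_nonneg _) (pow_nonneg hr0.le _)
        _ = ρ ^ (k + K + 1) := by rw [← hr2]; ring
    have hs : Summable (fun k : ℕ => |Λ (i, k + K + 1) ω| * |Λ (j, k + K + 1) ω|) :=
      Summable.of_nonneg_of_le (fun k => by positivity) hb hgeom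
    refine ⟨hs, lt_of_le_of_lt (Summable.tsum_le_tsum hb hs hgeom) ?_⟩
    rw [hsum]; exact hεb
  have htail : ∀ (p : Fin P) (k : ℕ),
      μ {ω | r ^ (k + K + 1) < |Λ (p, k + K + 1) ω|} ≤ ENNReal.ofReal (ρ ^ (k + K + 1)) := by
    intro p k
    have hm : MeasurableSet {x : ℝ | r ^ (k + K + 1) < |x|} :=
      measurableSet_lt measurable_const measurable_abs
    have hpre : {ω | r ^ (k + K + 1) < |Λ (p, k + K + 1) ω|}
        = Λ (p, k + K + 1) ⁻¹' {x | r ^ (k + K + 1) < |x|} := rfl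
    rw [hpre, ← Measure.map_apply (hmeas _) hm, hlaw p (k + K + 1) (by omega)]
    refine (gdp_tail_s10 (by linarith) (pow_pos hρ0 _) (pow_pos hr0 _)).trans
      (ENNReal.ofReal_le_ofReal ?_)
    have h2 : ρ ^ (k + K + 1) / r ^ (k + K + 1) = r ^ (k + K + 1) := by
      rw [← hr2]
      rw [div_eq_iff (by positivity : (r:ℝ) ^ (k + K + 1) ≠ 0)]
      ring
    rw [h2]
    calc (r ^ (k + K + 1) : ℝ) ^ δ ≤ (r ^ (k + K + 1)) ^ (2:ℝ) :=
          Real.rpow_le_rpow_of_exponent_ge (pow_pos hr0 _)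
            (pow_le_one₀ hr0.le hr1.le) (by linarith)
      _ = ρ ^ (k + K + 1) := by
          rw [Real.rpow_two, ← hr2]; ring
  have hGc : μ Gᶜ ≤ ENNReal.ofReal (ε / 2) := by
    have hGcEq : Gᶜ = ⋃ (p : Fin P) (k : ℕ), {ω | r ^ (k + K + 1) < |Λ (p, k + K + 1) ω|} := by
      rw [hGdef]
      simp only [Set.compl_iInter]
      congr 1; funext p; congr 1; funext k
      ext ω; simp [not_le]
    calc μ Gᶜ ≤ ∑' (p : Fin P), μ (⋃ k : ℕ, {ω | r ^ (k + K + 1) < |Λ (p, k + K + 1) ω|}) := by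
          rw [hGcEq]; exact measure_iUnion_le _
      _ ≤ ∑' (p : Fin P), ∑' (k : ℕ), μ {ω | r ^ (k + K + 1) < |Λ (p, k + K + 1) ω|} :=
          ENNReal.tsum_le_tsum fun p => measure_iUnion_le _
      _ ≤ ∑' (p : Fin P), ∑' (k : ℕ), ENNReal.ofReal (ρ ^ (k + K + 1)) :=
          ENNReal.tsum_le_tsum fun p => ENNReal.tsum_le_tsum fun k => htail p k
      _ = ∑' (_ : Fin P), ENNReal.ofReal (ρ ^ (K + 1) * (1 - ρ)⁻¹) := by
          congr 1; funext p
          rw [← ENNReal.ofReal_tsum_of_nonneg (fun k => by positivity) hgeom, hsum]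
      _ = (P : ℝ≥0∞) * ENNReal.ofReal (ρ ^ (K + 1) * (1 - ρ)⁻¹) := by
          rw [tsum_fintype]
          simp [Finset.sum_const, Finset.card_univ, nsmul_eq_mul]
      _ ≤ ENNReal.ofReal (ε / 2) := by
          rw [← ENNReal.ofReal_natCast P, ← ENNReal.ofReal_mul (by positivity)]
          exact ENNReal.ofReal_le_ofReal hPb
  have hμG : ENNReal.ofReal (1 - ε) < μ G := by
    have h1 : μ G + μ Gᶜ = 1 := by
      rw [measure_add_measure_compl hGm]; exact measure_univ
    have h2 : (1:ℝ≥0∞) ≤ μ G + ENNReal.ofReal (ε / 2) := by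
      rw [← h1]; exact add_le_add le_rfl hGc
    have h3 : (1:ℝ≥0∞) - ENNReal.ofReal (ε / 2) ≤ μ G := tsub_le_iff_right.2 h2
    refine lt_of_lt_of_le ?_ h3
    rw [← ENNReal.ofReal_one, ← ENNReal.ofReal_sub _ (by positivity)]
    exact (ENNReal.ofReal_lt_ofReal_iff (by linarith)).2 (by linarith)
  exact lt_of_lt_of_le hμG (measure_mono hGsub)
end

section
/- Let δ > 2 and 0 < ρ < δ, set α_k = δ^k and η_k = ρ^k for k ≥ 1, fix P ≥ 1, and let (λ_{pk})_{1≤p≤P, k≥1} be mutually independent real random variables with λ_{pk} distributed as GDP(α_k, η_k). Then there exists a constant C > 0 depending only on δ and ρ such that for every ε ∈ (0, 1): if K₀ is any integer with K₀ ≥ C·(1 + log(P/ε²)), then for every K ≥ K₀, with probability greater than 1 − ε, for all i, j ∈ {1, …, P} the series ∑_{k=K+1}^∞ |λ_{ik}||λ_{jk}| converges and is strictly less than ε. In particular K₀ can be taken of order (log(δ/ρ))^{−1} log(P/ε²). -/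
open MeasureTheory ProbabilityTheory

section Aux

open Set

lemma gdp_lintegral_Ioi {a η t : ℝ} (ha : 0 < a) (hη : 0 < η) (ht : 0 ≤ t) :
    ∫⁻ x in Set.Ioi t, ENNReal.ofReal (gdpPdf a η x) =
      ENNReal.ofReal ((1 / 2) * (1 + t / η) ^ (-a)) := by
  have hs : 0 < t + η := by linarith
  have he : -(a + 1) < -1 := by linarith
  have h1 : ∫⁻ x in Set.Ioi t, ENNReal.ofReal (gdpPdf a η x) =
      ∫⁻ x in Set.Ioi t,
        (fun y : ℝ => ENNReal.ofReal ((a / (2 * η)) * (y / η) ^ (-(a + 1)))) (x + η) := by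
    refine setLIntegral_congr_fun measurableSet_Ioi (fun x hx => ?_)
    have hx0 : 0 < x := lt_of_le_of_lt ht hx
    have hxx : (1 : ℝ) + x / η = (x + η) / η := by field_simp; ring
    simp only [gdpPdf, abs_of_pos hx0, hxx]
  have h2 : ∫⁻ x in Set.Ioi t,
      (fun y : ℝ => ENNReal.ofReal ((a / (2 * η)) * (y / η) ^ (-(a + 1)))) (x + η) =
      ∫⁻ y in Set.Ioi (t + η), ENNReal.ofReal ((a / (2 * η)) * (y / η) ^ (-(a + 1))) := by
    have hpre : (fun x : ℝ => x + η) ⁻¹' Set.Ioi (t + η) = Set.Ioi t := by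
      ext x; simp [Set.mem_Ioi]
    rw [← hpre]
    exact (measurePreserving_add_right volume η).setLIntegral_comp_preimage_emb
      (measurableEmbedding_addRight η)
      (fun y => ENNReal.ofReal ((a / (2 * η)) * (y / η) ^ (-(a + 1)))) _
  have h3 : ∫⁻ y in Set.Ioi (t + η), ENNReal.ofReal ((a / (2 * η)) * (y / η) ^ (-(a + 1))) =
      ∫⁻ y in Set.Ioi (t + η),
        ENNReal.ofReal ((a / (2 * η) / η ^ (-(a + 1))) * y ^ (-(a + 1))) := by
    refine setLIntegral_congr_fun measurableSet_Ioi (fun y hy => ?_)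
    have hy0 : (0 : ℝ) ≤ y := (lt_trans hs hy).le
    rw [Real.div_rpow hy0 hη.le]
    exact congrArg ENNReal.ofReal (by ring)
  have hint : IntegrableOn (fun y : ℝ => (a / (2 * η) / η ^ (-(a + 1))) * y ^ (-(a + 1)))
      (Set.Ioi (t + η)) := (integrableOn_Ioi_rpow_of_lt he hs).const_mul _
  have h4 : ∫⁻ y in Set.Ioi (t + η),
      ENNReal.ofReal ((a / (2 * η) / η ^ (-(a + 1))) * y ^ (-(a + 1))) =
      ENNReal.ofReal (∫ y in Set.Ioi (t + η),
        (a / (2 * η) / η ^ (-(a + 1))) * y ^ (-(a + 1))) := by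
    rw [← ofReal_integral_eq_lintegral_ofReal hint ?_]
    filter_upwards [ae_restrict_mem measurableSet_Ioi] with y hy
    have hy0 : (0 : ℝ) < y := lt_trans hs hy
    have : (0:ℝ) ≤ a / (2 * η) / η ^ (-(a + 1)) := by positivity
    exact mul_nonneg this (Real.rpow_nonneg hy0.le _)
  have h5 : ∫ y in Set.Ioi (t + η), (a / (2 * η) / η ^ (-(a + 1))) * y ^ (-(a + 1)) =
      (a / (2 * η) / η ^ (-(a + 1))) * (-(t + η) ^ (-(a + 1) + 1) / (-(a + 1) + 1)) := by
    rw [integral_const_mul, integral_Ioi_rpow_of_lt he hs]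
  rw [h1, h2, h3, h4, h5]
  congr 1
  have h6 : -(a + 1) + 1 = -a := by ring
  rw [h6]
  have hX : (0:ℝ) < (t + η) ^ a := Real.rpow_pos_of_pos hs a
  have hY : (0:ℝ) < η ^ a := Real.rpow_pos_of_pos hη a
  have h7 : (1 : ℝ) + t / η = (t + η) / η := by field_simp; ring
  rw [h7, Real.div_rpow hs.le hη.le, Real.rpow_neg hη.le (a + 1), Real.rpow_neg hs.le a,
    Real.rpow_neg hη.le a, Real.rpow_add_one hη.ne' a]
  field_simp

lemma gdp_lintegral_Iio {a η t : ℝ} :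
    ∫⁻ x in Set.Iio (-t), ENNReal.ofReal (gdpPdf a η x) =
      ∫⁻ x in Set.Ioi t, ENNReal.ofReal (gdpPdf a η x) := by
  have heven : ∀ x : ℝ, gdpPdf a η (-x) = gdpPdf a η x := by
    intro x; simp [gdpPdf, abs_neg]
  have hpre : (fun x : ℝ => -x) ⁻¹' Set.Ioi t = Set.Iio (-t) := by
    ext x; simp [Set.mem_Ioi, Set.mem_Iio, lt_neg]
  have h := (Measure.measurePreserving_neg (volume : Measure ℝ)).setLIntegral_comp_preimage_emb
      (MeasurableEquiv.neg ℝ).measurableEmbedding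
      (fun x => ENNReal.ofReal (gdpPdf a η x)) (Set.Ioi t)
  rw [hpre] at h
  rw [← h]
  exact setLIntegral_congr_fun measurableSet_Iio
    (fun x _ => by rw [heven])

lemma gdp_tail_le {a η t : ℝ} (ha : 0 < a) (hη : 0 < η) (ht : 0 ≤ t) :
    gdpMeasure a η {x : ℝ | t < |x|} ≤ ENNReal.ofReal ((1 + t / η) ^ (-a)) := by
  have hset : {x : ℝ | t < |x|} = Set.Iio (-t) ∪ Set.Ioi t := by
    ext x
    simp only [Set.mem_setOf_eq, Set.mem_union, Set.mem_Iio, Set.mem_Ioi, lt_abs]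
    constructor
    · rintro (h | h)
      · right; exact h
      · left; linarith
    · rintro (h | h)
      · right; linarith
      · left; exact h
  rw [gdpMeasure, hset]
  calc volume.withDensity (fun x => ENNReal.ofReal (gdpPdf a η x)) (Set.Iio (-t) ∪ Set.Ioi t)
      ≤ volume.withDensity (fun x => ENNReal.ofReal (gdpPdf a η x)) (Set.Iio (-t)) +
        volume.withDensity (fun x => ENNReal.ofReal (gdpPdf a η x)) (Set.Ioi t) :=
        measure_union_le _ _
    _ = (∫⁻ x in Set.Iio (-t), ENNReal.ofReal (gdpPdf a η x)) +
        ∫⁻ x in Set.Ioi t, ENNReal.ofReal (gdpPdf a η x) := by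
        rw [withDensity_apply _ measurableSet_Iio, withDensity_apply _ measurableSet_Ioi]
    _ = ENNReal.ofReal ((1 / 2) * (1 + t / η) ^ (-a)) +
        ENNReal.ofReal ((1 / 2) * (1 + t / η) ^ (-a)) := by
        rw [gdp_lintegral_Iio, gdp_lintegral_Ioi ha hη ht]
    _ = ENNReal.ofReal ((1 + t / η) ^ (-a)) := by
        rw [← ENNReal.ofReal_add (by positivity) (by positivity)]
        exact congrArg ENNReal.ofReal (by ring)

lemma numeric_aux {C c M L n R : ℝ} (hc : 0 < c) (h1 : 1 ≤ C * c) (hM : M ≤ C * c)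
    (hL : 0 ≤ L) (hR : R ≤ M + L) (hn : C * (1 + L) ≤ n) : R ≤ n * c := by
  nlinarith [mul_le_mul_of_nonneg_right hn hc.le, mul_nonneg (sub_nonneg.2 h1) hL]

end Aux

theorem gdp_truncation_close_condition_III {Ω : Type*} [MeasurableSpace Ω] (μ : Measure Ω)
    [IsProbabilityMeasure μ] (δ ρ : ℝ) (hδ : 2 < δ) (hρ0 : 0 < ρ) (hρδ : ρ < δ)
    (P : ℕ) (hP : 0 < P) (Λ : Fin P × ℕ → Ω → ℝ) (hmeas : ∀ pk, Measurable (Λ pk))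
    (hindep : ProbabilityTheory.iIndepFun Λ μ)
    (hlaw : ∀ (p : Fin P) (k : ℕ), 1 ≤ k →
      Measure.map (Λ (p, k)) μ = gdpMeasure (δ ^ k) (ρ ^ k)) :
    ∃ C : ℝ, 0 < C ∧ ∀ ε : ℝ, 0 < ε → ε < 1 → ∀ K₀ : ℕ,
      C * (1 + Real.log ((P : ℝ) / ε ^ 2)) ≤ (K₀ : ℝ) → ∀ K : ℕ, K₀ ≤ K →
      ENNReal.ofReal (1 - ε) <
        μ {ω | ∀ i j : Fin P,
          Summable (fun k : ℕ => |Λ (i, k + K + 1) ω| * |Λ (j, k + K + 1) ω|) ∧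
          (∑' k : ℕ, |Λ (i, k + K + 1) ω| * |Λ (j, k + K + 1) ω|) < ε} := by
  have hδ0 : (0:ℝ) < δ := by linarith
  set θ : ℝ := (δ + ρ) / (2 * δ) with hθdef
  set β : ℝ := 2 * ρ / (δ + ρ) with hβdef
  set τ : ℝ := θ ^ 2 with hτdef
  have hθ0 : 0 < θ := by positivity
  have hθ1 : θ < 1 := by rw [hθdef, div_lt_one (by linarith)]; linarith
  have hβ0 : 0 < β := by positivity
  have hβ1 : β < 1 := by rw [hβdef, div_lt_one (by linarith)]; linarith
  have hτ0 : 0 < τ := by positivity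
  have hτ1 : τ < 1 := by
    rw [hτdef]; nlinarith
  have hcτ : 0 < Real.log τ⁻¹ := by
    rw [Real.log_inv]; linarith [Real.log_neg hτ0 hτ1]
  have hcβ : 0 < Real.log β⁻¹ := by
    rw [Real.log_inv]; linarith [Real.log_neg hβ0 hβ1]
  -- Bernoulli-based tail estimate
  have key : ∀ n : ℕ, 1 ≤ n → (1 + θ ^ n / ρ ^ n) ^ (-(δ ^ n : ℝ)) ≤ β ^ n := by
    intro n hn
    have hx0 : (0:ℝ) ≤ (θ / ρ) ^ n := by positivity
    have hp1 : (1:ℝ) ≤ δ ^ n := one_le_pow₀ (by linarith)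
    have hbern : 1 + (δ ^ n : ℝ) * (θ / ρ) ^ n ≤ (1 + (θ / ρ) ^ n) ^ (δ ^ n : ℝ) :=
      one_add_mul_self_le_rpow_one_add (by linarith) hp1
    have hβinv : β⁻¹ = δ * (θ / ρ) := by
      rw [hβdef, hθdef]; field_simp
    have h2 : (β⁻¹) ^ n ≤ (1 + (θ / ρ) ^ n) ^ (δ ^ n : ℝ) := by
      rw [hβinv, mul_pow]
      nlinarith
    have hβinvpos : (0:ℝ) < (β⁻¹) ^ n := by positivity
    have h3 : (1 + (θ / ρ) ^ n) ^ (-(δ ^ n : ℝ)) ≤ ((β⁻¹) ^ n)⁻¹ := by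
      rw [Real.rpow_neg (by positivity)]
      exact inv_anti₀ hβinvpos h2
    have h4 : ((β⁻¹) ^ n)⁻¹ = β ^ n := by
      rw [← inv_pow, inv_inv]
    rw [← div_pow]
    exact h3.trans (le_of_eq h4)
  -- the constant
  set Mτ : ℝ := max 1 (Real.log (2 / (1 - τ))) with hMτdef
  set Mβ : ℝ := max 1 (Real.log (2 / (1 - β))) with hMβdef
  set C : ℝ := max 1 (max (Mτ / Real.log τ⁻¹) (Mβ / Real.log β⁻¹)) with hCdef
  have hC0 : 0 < C := lt_of_lt_of_le one_pos (le_max_left _ _)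
  have hCτ : Mτ ≤ C * Real.log τ⁻¹ := by
    have h : Mτ / Real.log τ⁻¹ ≤ C := le_trans (le_max_left _ (Mβ / Real.log β⁻¹)) (le_max_right 1 _)
    calc Mτ = Mτ / Real.log τ⁻¹ * Real.log τ⁻¹ := (div_mul_cancel₀ _ hcτ.ne').symm
      _ ≤ C * Real.log τ⁻¹ := mul_le_mul_of_nonneg_right h hcτ.le
  have hCβ : Mβ ≤ C * Real.log β⁻¹ := by
    have h : Mβ / Real.log β⁻¹ ≤ C := le_trans (le_max_right (Mτ / Real.log τ⁻¹) _) (le_max_right 1 _)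
    calc Mβ = Mβ / Real.log β⁻¹ * Real.log β⁻¹ := (div_mul_cancel₀ _ hcβ.ne').symm
      _ ≤ C * Real.log β⁻¹ := mul_le_mul_of_nonneg_right h hcβ.le
  have h1Mτ : (1:ℝ) ≤ Mτ := le_max_left _ _
  have h1Mβ : (1:ℝ) ≤ Mβ := le_max_left _ _
  refine ⟨C, hC0, ?_⟩
  intro ε hε0 hε1 K₀ hK₀ K hKK
  set L : ℝ := Real.log ((P : ℝ) / ε ^ 2) with hLdef
  have hP1 : (1:ℝ) ≤ (P:ℝ) := by exact_mod_cast hP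
  have hLsplit : L = Real.log (P:ℝ) - 2 * Real.log ε := by
    rw [hLdef, Real.log_div (by positivity) (by positivity), Real.log_pow]
    push_cast; ring
  have hlogP : 0 ≤ Real.log (P:ℝ) := Real.log_nonneg hP1
  have hlogε : Real.log ε ≤ 0 := Real.log_nonpos hε0.le hε1.le
  have hL0 : 0 ≤ L := by rw [hLsplit]; linarith
  have hKC : C * (1 + L) ≤ (K:ℝ) + 1 := by
    have h1 : (K₀:ℝ) ≤ (K:ℝ) := by exact_mod_cast hKK
    linarith
  have h1τ : 0 < 1 - τ := by linarith
  have h1β : 0 < 1 - β := by linarith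
  -- geometric smallness
  have hτK : τ ^ (K + 1) ≤ ε * (1 - τ) / 2 := by
    have hR : Real.log (2 / (1 - τ)) + -Real.log ε ≤ ((K:ℝ)+1) * Real.log τ⁻¹ := by
      refine numeric_aux hcτ (le_trans h1Mτ hCτ) hCτ hL0 ?_ hKC
      have : -Real.log ε ≤ L := by rw [hLsplit]; linarith
      have h2 : Real.log (2 / (1 - τ)) ≤ Mτ := le_max_right _ _
      linarith
    have hexp : ((K:ℝ)+1) * Real.log τ ≤ Real.log (ε * (1 - τ) / 2) := by
      have heq : ε * (1 - τ) / 2 = ε / (2 / (1 - τ)) := by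
        rw [div_div_eq_mul_div]
      rw [heq, Real.log_div hε0.ne' (ne_of_gt (div_pos two_pos h1τ))]
      have hlogτ : Real.log τ⁻¹ = -Real.log τ := Real.log_inv τ
      rw [hlogτ] at hR
      have : ((K:ℝ)+1) * -Real.log τ = -(((K:ℝ)+1) * Real.log τ) := by ring
      rw [this] at hR
      linarith
    calc τ ^ (K + 1) = Real.exp (((K:ℝ)+1) * Real.log τ) := by
          rw [show ((K:ℝ)+1) = ((K+1 : ℕ):ℝ) by push_cast; ring, Real.exp_nat_mul,
            Real.exp_log hτ0]
      _ ≤ Real.exp (Real.log (ε * (1 - τ) / 2)) := Real.exp_le_exp.2 hexp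
      _ = ε * (1 - τ) / 2 := Real.exp_log (div_pos (mul_pos hε0 h1τ) two_pos)
  have hβK : (P:ℝ) * β ^ (K + 1) ≤ ε * (1 - β) / 2 := by
    have hR : Real.log (2 / (1 - β)) + (Real.log (P:ℝ) - Real.log ε) ≤
        ((K:ℝ)+1) * Real.log β⁻¹ := by
      refine numeric_aux hcβ (le_trans h1Mβ hCβ) hCβ hL0 ?_ hKC
      have : Real.log (P:ℝ) - Real.log ε ≤ L := by rw [hLsplit]; linarith
      have h2 : Real.log (2 / (1 - β)) ≤ Mβ := le_max_right _ _
      linarith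
    have hexp : Real.log (P:ℝ) + ((K:ℝ)+1) * Real.log β ≤ Real.log (ε * (1 - β) / 2) := by
      have heq : ε * (1 - β) / 2 = ε / (2 / (1 - β)) := by rw [div_div_eq_mul_div]
      rw [heq, Real.log_div hε0.ne' (ne_of_gt (div_pos two_pos h1β))]
      have hlogβ : Real.log β⁻¹ = -Real.log β := Real.log_inv β
      rw [hlogβ] at hR
      have : ((K:ℝ)+1) * -Real.log β = -(((K:ℝ)+1) * Real.log β) := by ring
      rw [this] at hR
      linarith
    calc (P:ℝ) * β ^ (K + 1)
        = Real.exp (Real.log (P:ℝ) + ((K:ℝ)+1) * Real.log β) := by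
          rw [Real.exp_add, Real.exp_log (by positivity : (0:ℝ) < (P:ℝ)),
            show ((K:ℝ)+1) = ((K+1 : ℕ):ℝ) by push_cast; ring, Real.exp_nat_mul,
            Real.exp_log hβ0]
      _ ≤ Real.exp (Real.log (ε * (1 - β) / 2)) := Real.exp_le_exp.2 hexp
      _ = ε * (1 - β) / 2 := Real.exp_log (div_pos (mul_pos hε0 h1β) two_pos)
  -- the bad event
  set A : Fin P × ℕ → Set Ω :=
    fun pk => {ω | θ ^ (pk.2 + K + 1) < |Λ (pk.1, pk.2 + K + 1) ω|} with hAdef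
  have hAm : ∀ pk, MeasurableSet (A pk) := fun pk =>
    measurableSet_lt measurable_const (hmeas _).abs
  have hBm : MeasurableSet (⋃ pk, A pk) := MeasurableSet.iUnion hAm
  have hAle : ∀ pk : Fin P × ℕ, μ (A pk) ≤ ENNReal.ofReal (β ^ (pk.2 + K + 1)) := by
    rintro ⟨p, k⟩
    have hn : 1 ≤ k + K + 1 := by omega
    have hS : MeasurableSet {x : ℝ | θ ^ (k + K + 1) < |x|} :=
      measurableSet_lt measurable_const measurable_abs
    have hAeq : A (p, k) = Λ (p, k + K + 1) ⁻¹' {x : ℝ | θ ^ (k + K + 1) < |x|} := rfl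
    rw [hAeq, ← Measure.map_apply (hmeas _) hS, hlaw p _ hn]
    refine le_trans (gdp_tail_le (pow_pos hδ0 _) (pow_pos hρ0 _) (pow_pos hθ0 _).le) ?_
    exact ENNReal.ofReal_le_ofReal (key (k + K + 1) hn)
  have hsumk : ∑' k : ℕ, ENNReal.ofReal (β ^ (k + K + 1)) =
      ENNReal.ofReal (β ^ (K + 1) * (1 - β)⁻¹) := by
    have h0 : ∀ k : ℕ, β ^ (k + K + 1) = β ^ (K + 1) * β ^ k := fun k => by
      rw [show k + K + 1 = (K + 1) + k by omega, pow_add]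
    simp only [h0]
    rw [← ENNReal.ofReal_tsum_of_nonneg (fun k => mul_nonneg (pow_nonneg hβ0.le _) (pow_nonneg hβ0.le _))
      ((summable_geometric_of_lt_one hβ0.le hβ1).mul_left _)]
    rw [tsum_mul_left, tsum_geometric_of_lt_one hβ0.le hβ1]
  have hB : μ (⋃ pk, A pk) ≤ ENNReal.ofReal (ε / 2) := by
    calc μ (⋃ pk, A pk) ≤ ∑' pk : Fin P × ℕ, μ (A pk) := measure_iUnion_le _
      _ ≤ ∑' pk : Fin P × ℕ, ENNReal.ofReal (β ^ (pk.2 + K + 1)) :=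
          ENNReal.tsum_le_tsum hAle
      _ = ∑ p : Fin P, ∑' k : ℕ, ENNReal.ofReal (β ^ (k + K + 1)) := by
          rw [ENNReal.tsum_prod', tsum_fintype]
      _ = (P : ENNReal) * ENNReal.ofReal (β ^ (K + 1) * (1 - β)⁻¹) := by
          rw [hsumk, Finset.sum_const, Finset.card_univ, Fintype.card_fin, nsmul_eq_mul]
      _ = ENNReal.ofReal ((P:ℝ) * (β ^ (K + 1) * (1 - β)⁻¹)) := by
          rw [← ENNReal.ofReal_natCast P, ← ENNReal.ofReal_mul (by positivity)]
      _ ≤ ENNReal.ofReal (ε / 2) := by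
          refine ENNReal.ofReal_le_ofReal ?_
          calc (P:ℝ) * (β ^ (K + 1) * (1 - β)⁻¹) = ((P:ℝ) * β ^ (K + 1)) * (1 - β)⁻¹ := by
                ring
            _ ≤ (ε * (1 - β) / 2) * (1 - β)⁻¹ :=
                mul_le_mul_of_nonneg_right hβK (inv_nonneg.2 h1β.le)
            _ = ε / 2 := by field_simp
  -- inclusion of the good event
  have hsub : (⋃ pk, A pk)ᶜ ⊆ {ω | ∀ i j : Fin P,
      Summable (fun k : ℕ => |Λ (i, k + K + 1) ω| * |Λ (j, k + K + 1) ω|) ∧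
      (∑' k : ℕ, |Λ (i, k + K + 1) ω| * |Λ (j, k + K + 1) ω|) < ε} := by
    intro ω hω
    simp only [Set.mem_compl_iff, Set.mem_iUnion, not_exists] at hω
    have hb : ∀ (p : Fin P) (k : ℕ), |Λ (p, k + K + 1) ω| ≤ θ ^ (k + K + 1) := by
      intro p k
      have := hω (p, k)
      simpa [hAdef, Set.mem_setOf_eq, not_lt] using this
    intro i j
    have hterm : ∀ k : ℕ, |Λ (i, k + K + 1) ω| * |Λ (j, k + K + 1) ω| ≤ τ ^ (k + K + 1) := by
      intro k
      have h1 := hb i k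
      have h2 := hb j k
      have h3 : |Λ (i, k + K + 1) ω| * |Λ (j, k + K + 1) ω| ≤
          θ ^ (k + K + 1) * θ ^ (k + K + 1) :=
        mul_le_mul h1 h2 (abs_nonneg _) (pow_nonneg hθ0.le _)
      calc |Λ (i, k + K + 1) ω| * |Λ (j, k + K + 1) ω| ≤
          θ ^ (k + K + 1) * θ ^ (k + K + 1) := h3
        _ = τ ^ (k + K + 1) := by rw [hτdef, ← pow_mul, two_mul, ← pow_add]
    have hgeq : (fun k : ℕ => τ ^ (k + K + 1)) = fun k : ℕ => τ ^ (K + 1) * τ ^ k := by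
      funext k; rw [show k + K + 1 = (K + 1) + k by omega, pow_add]
    have hg : Summable (fun k : ℕ => τ ^ (k + K + 1)) := by
      rw [hgeq]; exact (summable_geometric_of_lt_one hτ0.le hτ1).mul_left _
    have hgsum : (∑' k : ℕ, τ ^ (k + K + 1)) = τ ^ (K + 1) * (1 - τ)⁻¹ := by
      rw [hgeq, tsum_mul_left, tsum_geometric_of_lt_one hτ0.le hτ1]
    have hS : Summable (fun k : ℕ => |Λ (i, k + K + 1) ω| * |Λ (j, k + K + 1) ω|) :=
      Summable.of_nonneg_of_le (fun k => by positivity) hterm hg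
    refine ⟨hS, lt_of_le_of_lt (Summable.tsum_le_tsum hterm hS hg) ?_⟩
    rw [hgsum]
    calc τ ^ (K + 1) * (1 - τ)⁻¹ ≤ (ε * (1 - τ) / 2) * (1 - τ)⁻¹ :=
          mul_le_mul_of_nonneg_right hτK (inv_nonneg.2 h1τ.le)
      _ = ε / 2 := by field_simp
      _ < ε := by linarith
  -- conclude
  calc ENNReal.ofReal (1 - ε) < ENNReal.ofReal (1 - ε / 2) := by
        rw [ENNReal.ofReal_lt_ofReal_iff (by linarith)]; linarith
    _ = 1 - ENNReal.ofReal (ε / 2) := by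
        rw [ENNReal.ofReal_sub 1 (by positivity), ENNReal.ofReal_one]
    _ ≤ 1 - μ (⋃ pk, A pk) := tsub_le_tsub_left hB 1
    _ = μ ((⋃ pk, A pk)ᶜ) := by
        rw [measure_compl hBm (measure_ne_top μ _), measure_univ]
    _ ≤ _ := measure_mono hsub
end
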